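/- arXiv:1102.5585 — 5 statements merged into one kernel-verified Lean document; each statement's English description precedes it below -/
import Mathlib

section
/- A two-level PT-net system N with T = L ∪ H has the property BNDC if and only if it has the property SBNDC. -/
/-! ## Labelled transition systems -/

structure LTS (Q : Type _) (A : Type _) where
  init : Q
  tr : Q → A → Q → Prop

namespace LTS

variable {Q Q' A : Type _}

/-- One unobservable step. -/
def TauStep (S : LTS Q A) (Obs : Set A) (q q' : Q) : Prop :=
  ∃ τ, τ ∉ Obs ∧ S.tr q τ q'

/-- `q →* q'` : reflexive-transitive closure of unobservable steps. -/
def TauStar (S : LTS Q A) (Obs : Set A) : Q → Q → Prop :=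
  Relation.ReflTransGen (S.TauStep Obs)

/-- Weak steps producing a word of observable labels. -/
inductive WeakSteps (S : LTS Q A) (Obs : Set A) : Q → List A → Q → Prop
  | nil (q : Q) : WeakSteps S Obs q [] q
  | tau {q q' q'' : Q} {w : List A} {τ : A} :
      τ ∉ Obs → S.tr q τ q' → WeakSteps S Obs q' w q'' → WeakSteps S Obs q w q''
  | obs {q q' q'' : Q} {w : List A} {σ : A} :
      σ ∈ Obs → S.tr q σ q' → WeakSteps S Obs q' w q'' → WeakSteps S Obs q (σ :: w) q''

/-- The language of a partially observed LTS. -/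
def lang (S : LTS Q A) (Obs : Set A) : Set (List A) :=
  { w | ∃ q, S.WeakSteps Obs S.init w q }

end LTS

/-- `R` is a weak simulation of `S` by `S'`. -/
def IsWeakSimulation {Q Q' A : Type _} (Obs : Set A) (S : LTS Q A) (S' : LTS Q' A)
    (R : Q → Q' → Prop) : Prop :=
  R S.init S'.init ∧
  ∀ q1 q1', R q1 q1' →
    (∀ σ ∈ Obs, ∀ q2, S.tr q1 σ q2 →
      ∃ q1'' q2'' q2', S'.TauStar Obs q1' q1'' ∧ S'.tr q1'' σ q2'' ∧
        S'.TauStar Obs q2'' q2' ∧ R q2 q2') ∧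
    (∀ τ ∉ Obs, ∀ q2, S.tr q1 τ q2 →
      ∃ q2', S'.TauStar Obs q1' q2' ∧ R q2 q2')

/-- `S` is weakly simulated by `S'`. -/
def WeaklySimulated {Q Q' A : Type _} (Obs : Set A) (S : LTS Q A) (S' : LTS Q' A) : Prop :=
  ∃ R, IsWeakSimulation Obs S S' R

/-- `R` is a weak bisimulation between `S` and `S'`. -/
def IsWeakBisimulation {Q Q' A : Type _} (Obs : Set A) (S : LTS Q A) (S' : LTS Q' A)
    (R : Q → Q' → Prop) : Prop :=
  IsWeakSimulation Obs S S' R ∧ IsWeakSimulation Obs S' S (fun q' q => R q q')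

/-- `S` and `S'` are weakly bisimilar. -/
def WeaklyBisimilar {Q Q' A : Type _} (Obs : Set A) (S : LTS Q A) (S' : LTS Q' A) : Prop :=
  ∃ R, IsWeakBisimulation Obs S S' R

/-! ## Place/Transition Petri nets -/

/-- A PT-net over a universe `P` of places and `Tr` of transitions:
a finite set of places, a finite set of transitions, and input/output flows.
Flows of non-transitions vanish. -/
structure PTNet (P : Type _) (Tr : Type _) where
  places : Finset P
  transitions : Finset Tr
  pre : Tr → P → ℕ
  post : Tr → P → ℕ
  pre_eq_zero : ∀ t ∉ transitions, ∀ p, pre t p = 0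
  post_eq_zero : ∀ t ∉ transitions, ∀ p, post t p = 0

namespace PTNet

variable {P Tr : Type _} [DecidableEq P] [DecidableEq Tr]

/-- `M[t⟩` : transition `t` is enabled at marking `M`. -/
def Enabled (N : PTNet P Tr) (M : P → ℕ) (t : Tr) : Prop :=
  t ∈ N.transitions ∧ ∀ p ∈ N.places, N.pre t p ≤ M p

/-- The marking obtained by firing `t` at `M`. -/
def fire (N : PTNet P Tr) (M : P → ℕ) (t : Tr) : P → ℕ :=
  fun p => if p ∈ N.places then M p + N.post t p - N.pre t p else M p

/-- `M[t⟩M'`. -/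
def Fires (N : PTNet P Tr) (M : P → ℕ) (t : Tr) (M' : P → ℕ) : Prop :=
  N.Enabled M t ∧ M' = N.fire M t

/-- `M[s⟩M'` for a sequence `s` of transitions. -/
def FiresSeq (N : PTNet P Tr) : (P → ℕ) → List Tr → (P → ℕ) → Prop
  | M, [], M' => M' = M
  | M, t :: s, M' => ∃ M'', N.Fires M t M'' ∧ N.FiresSeq M'' s M'

/-- `M'` is reachable from `M`. -/
def Reachable (N : PTNet P Tr) (M M' : P → ℕ) : Prop :=
  ∃ s, N.FiresSeq M s M'

/-- The restriction `N \ T'` of a net: the transitions in `T'` are removed. -/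
def restrict (N : PTNet P Tr) (T' : Finset Tr) : PTNet P Tr where
  places := N.places
  transitions := N.transitions \ T'
  pre := fun t p => if t ∈ N.transitions \ T' then N.pre t p else 0
  post := fun t p => if t ∈ N.transitions \ T' then N.post t p else 0
  pre_eq_zero := by intro t ht p; simp [ht]
  post_eq_zero := by intro t ht p; simp [ht]

/-- The composition `N1 | N2` of two nets (intended for disjoint place sets);
shared transitions synchronize. -/
def comp (N1 N2 : PTNet P Tr) : PTNet P Tr where
  places := N1.places ∪ N2.places
  transitions := N1.transitions ∪ N2.transitions
  pre := fun t p => if p ∈ N1.places then N1.pre t p else N2.pre t p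
  post := fun t p => if p ∈ N1.places then N1.post t p else N2.post t p
  pre_eq_zero := by
    intro t ht p
    simp only [Finset.mem_union, not_or] at ht
    by_cases hp : p ∈ N1.places <;>
      simp [hp, N1.pre_eq_zero t ht.1, N2.pre_eq_zero t ht.2]
  post_eq_zero := by
    intro t ht p
    simp only [Finset.mem_union, not_or] at ht
    by_cases hp : p ∈ N1.places <;>
      simp [hp, N1.post_eq_zero t ht.1, N2.post_eq_zero t ht.2]

/-- The union of two initial markings (agrees with `M1` on the places of `N1`,
with `M2` elsewhere). -/
def combine (N1 : PTNet P Tr) (M1 M2 : P → ℕ) : P → ℕ :=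
  fun p => if p ∈ N1.places then M1 p else M2 p

/-- The reachability graph of a marked net, as an LTS on markings. -/
def toLTS (N : PTNet P Tr) (M0 : P → ℕ) : LTS (P → ℕ) Tr where
  init := M0
  tr := fun M t M' => N.Fires M t M'

/-- The language of the net system `(N, M0)` whose observable transitions are
those in `L` (labelled by themselves): projections of firing sequences onto `L*`. -/
def lang (N : PTNet P Tr) (M0 : P → ℕ) (L : Finset Tr) : Set (List Tr) :=
  { w | ∃ s M, N.FiresSeq M0 s M ∧ s.filter (· ∈ L) = w }

/-- The free language of the net system `(N, M0)`: all of its firing sequences. -/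
def freeLang (N : PTNet P Tr) (M0 : P → ℕ) : Set (List Tr) :=
  { s | ∃ M, N.FiresSeq M0 s M }

/-- The net with given places and transitions and empty flow. -/
def ofSets (Pl : Finset P) (Ts : Finset Tr) : PTNet P Tr where
  places := Pl
  transitions := Ts
  pre := fun _ _ => 0
  post := fun _ _ => 0
  pre_eq_zero := fun _ _ _ => rfl
  post_eq_zero := fun _ _ _ => rfl

end PTNet

/-! ## Non-interference properties -/

section Security

variable {P Tr : Type _} [DecidableEq P] [DecidableEq Tr]

/-- Non-Deducibility on Compositions: for every high-level net system `N'`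
(with any initial marking `M0'`) whose places are disjoint from those of `N` and
whose transitions avoid `L`, the systems `N \ H` and `(N | N') \ (H \ H')` are
language equivalent, the observable transitions being those in `L`. -/
def NDC (N : PTNet P Tr) (M0 : P → ℕ) (L H : Finset Tr) : Prop :=
  ∀ (N' : PTNet P Tr) (M0' : P → ℕ),
    Disjoint N.places N'.places → Disjoint N'.transitions L →
    (N.restrict H).lang M0 L =
      ((N.comp N').restrict (H \ N'.transitions)).lang (N.combine M0 M0') L

/-- Bisimulation-based Non-Deducibility on Compositions: as `NDC`, but with
weak bisimilarity in place of language equivalence. -/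
def BNDC (N : PTNet P Tr) (M0 : P → ℕ) (L H : Finset Tr) : Prop :=
  ∀ (N' : PTNet P Tr) (M0' : P → ℕ),
    Disjoint N.places N'.places → Disjoint N'.transitions L →
    WeaklyBisimilar (L : Set Tr) ((N.restrict H).toLTS M0)
      (((N.comp N').restrict (H \ N'.transitions)).toLTS (N.combine M0 M0'))

/-- Strong BNDC: whenever a reachable marking `M1` enables a high transition `h`
with `M1[h⟩M2`, the systems `(N \ H, M1)` and `(N \ H, M2)` are weakly bisimilar. -/
def SBNDC (N : PTNet P Tr) (M0 : P → ℕ) (L H : Finset Tr) : Prop :=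
  ∀ M1 h M2, N.Reachable M0 M1 → h ∈ H → N.Fires M1 h M2 →
    WeaklyBisimilar (L : Set Tr) ((N.restrict H).toLTS M1) ((N.restrict H).toLTS M2)

/-- The least relation generated from `M0 R M0` by:
(i) if `M1 R M2` and `M2[h⟩M2'` with `h ∈ H` then `M1 R M2'`;
(ii) if `M1 R M2`, `M1[l⟩M1'` (in `N \ H`) and `M2[l⟩M2'` with `l ∈ L`
then `M1' R M2'`. -/
inductive RRel (N : PTNet P Tr) (M0 : P → ℕ) (L H : Finset Tr) : (P → ℕ) → (P → ℕ) → Prop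
  | base : RRel N M0 L H M0 M0
  | high {M1 M2 M2' : P → ℕ} {h : Tr} : h ∈ H → RRel N M0 L H M1 M2 →
      N.Fires M2 h M2' → RRel N M0 L H M1 M2'
  | low {M1 M2 M1' M2' : P → ℕ} {l : Tr} : l ∈ L → RRel N M0 L H M1 M2 →
      (N.restrict H).Fires M1 l M1' → N.Fires M2 l M2' → RRel N M0 L H M1' M2'

/-- The property `P(h,l)`: for all `w ∈ (L ∪ H)*` and `s ∈ L*`, if `M0[w⟩M1`,
`M1[h⟩M2`, `M1[s⟩M3` and `M2[s⟩M4`, then `M3[l⟩` iff `M4[l⟩`. -/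
def PropP (N : PTNet P Tr) (M0 : P → ℕ) (L H : Finset Tr) (h l : Tr) : Prop :=
  ∀ (w s : List Tr) (M1 M2 M3 M4 : P → ℕ),
    (∀ t ∈ w, t ∈ L ∪ H) → (∀ t ∈ s, t ∈ L) →
    N.FiresSeq M0 w M1 → N.Fires M1 h M2 →
    N.FiresSeq M1 s M3 → N.FiresSeq M2 s M4 →
    (N.Enabled M3 l ↔ N.Enabled M4 l)

/-- Intransitive Non-Interference for a three-level net system:
`(N \ D, M)` has NDC (w.r.t. low `L`, high `H`) for `M = M0` and for every
marking `M` with `M0[υd⟩M` in `N`, `d ∈ D`. -/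
def INI (N : PTNet P Tr) (M0 : P → ℕ) (L D H : Finset Tr) : Prop :=
  NDC (N.restrict D) M0 L H ∧
  ∀ (υ : List Tr) (d : Tr) (M : P → ℕ), d ∈ D → N.FiresSeq M0 (υ ++ [d]) M →
    NDC (N.restrict D) M L H

/-- Bisimulation-based Intransitive Non-Interference: as `INI` with `BNDC`. -/
def BINI (N : PTNet P Tr) (M0 : P → ℕ) (L D H : Finset Tr) : Prop :=
  BNDC (N.restrict D) M0 L H ∧
  ∀ (υ : List Tr) (d : Tr) (M : P → ℕ), d ∈ D → N.FiresSeq M0 (υ ++ [d]) M →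
    BNDC (N.restrict D) M L H

/-- The property `Q(h,l)`: for all `χ ∈ T*` and `s ∈ L*`, if `M0[χ⟩M1`,
`M1[h⟩M2`, `M1[s⟩M3` and `M2[s⟩M4`, then `M3[l⟩` iff `M4[l⟩`. -/
def PropQ (N : PTNet P Tr) (M0 : P → ℕ) (L : Finset Tr) (h l : Tr) : Prop :=
  ∀ (χ s : List Tr) (M1 M2 M3 M4 : P → ℕ),
    (∀ t ∈ χ, t ∈ N.transitions) → (∀ t ∈ s, t ∈ L) →
    N.FiresSeq M0 χ M1 → N.Fires M1 h M2 →
    N.FiresSeq M1 s M3 → N.FiresSeq M2 s M4 →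
    (N.Enabled M3 l ↔ N.Enabled M4 l)

end Security

/-! ## Auxiliary lemmas on weak (bi)simulations -/

section WeakAux

variable {Q Q' Q'' A : Type _} {Obs : Set A}

lemma IsWeakSimulation.tauStar {S : LTS Q A} {S' : LTS Q' A} {R}
    (h : IsWeakSimulation Obs S S' R) {a a' : Q} {b : Q'} (hab : R a b)
    (hs : S.TauStar Obs a a') : ∃ b', S'.TauStar Obs b b' ∧ R a' b' := by
  induction hs with
  | refl => exact ⟨b, Relation.ReflTransGen.refl, hab⟩
  | tail _ hstep ih =>
      obtain ⟨b', hb', hR⟩ := ih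
      obtain ⟨τ, hτ, htr⟩ := hstep
      obtain ⟨b'', hb'', hR'⟩ := ((h.2 _ _ hR).2) τ hτ _ htr
      exact ⟨b'', hb'.trans hb'', hR'⟩

lemma IsWeakSimulation.mono {S : LTS Q A} {S' : LTS Q' A} {R R'}
    (h : IsWeakSimulation Obs S S' R) (hRR : ∀ a b, R' a b ↔ R a b) :
    IsWeakSimulation Obs S S' R' := by
  refine ⟨(hRR _ _).2 h.1, fun a b hab => ?_⟩
  obtain ⟨h1, h2⟩ := h.2 a b ((hRR _ _).1 hab)
  refine ⟨fun σ hσ q2 hq2 => ?_, fun τ hτ q2 hq2 => ?_⟩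
  · obtain ⟨x, y, z, hx, hy, hz, hR⟩ := h1 σ hσ q2 hq2
    exact ⟨x, y, z, hx, hy, hz, (hRR _ _).2 hR⟩
  · obtain ⟨z, hz, hR⟩ := h2 τ hτ q2 hq2
    exact ⟨z, hz, (hRR _ _).2 hR⟩

lemma IsWeakSimulation.comp {S : LTS Q A} {S' : LTS Q' A} {S'' : LTS Q'' A} {R R'}
    (h : IsWeakSimulation Obs S S' R) (h' : IsWeakSimulation Obs S' S'' R') :
    IsWeakSimulation Obs S S'' (fun a c => ∃ b, R a b ∧ R' b c) := by
  refine ⟨⟨S'.init, h.1, h'.1⟩, ?_⟩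
  rintro a c ⟨b, hab, hbc⟩
  refine ⟨fun σ hσ a₂ ha₂ => ?_, fun τ hτ a₂ ha₂ => ?_⟩
  · obtain ⟨b₁, b₂, b₃, hb1, hb12, hb23, hR2⟩ := (h.2 a b hab).1 σ hσ a₂ ha₂
    obtain ⟨c₁, hc1, hbc1⟩ := h'.tauStar hbc hb1
    obtain ⟨c₂, c₃, c₄, hcc2, hc23, hc34, hR'⟩ := (h'.2 b₁ c₁ hbc1).1 σ hσ b₂ hb12
    obtain ⟨c₅, hc45, hR''⟩ := h'.tauStar hR' hb23
    exact ⟨c₂, c₃, c₅, hc1.trans hcc2, hc23, hc34.trans hc45, b₃, hR2, hR''⟩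
  · obtain ⟨b₂, hb, hR2⟩ := (h.2 a b hab).2 τ hτ a₂ ha₂
    obtain ⟨c₂, hc, hR'⟩ := h'.tauStar hbc hb
    exact ⟨c₂, hc, b₂, hR2, hR'⟩

lemma isWeakSimulation_eq (S : LTS Q A) : IsWeakSimulation Obs S S Eq := by
  refine ⟨rfl, fun a b hab => ?_⟩
  subst hab
  exact ⟨fun σ _ q2 h => ⟨a, q2, q2, Relation.ReflTransGen.refl, h,
      Relation.ReflTransGen.refl, rfl⟩,
    fun τ hτ q2 h => ⟨q2, Relation.ReflTransGen.single ⟨τ, hτ, h⟩, rfl⟩⟩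

lemma weaklyBisimilar_refl (S : LTS Q A) : WeaklyBisimilar Obs S S :=
  ⟨Eq, isWeakSimulation_eq S,
    (isWeakSimulation_eq S).mono (fun a b => eq_comm)⟩

lemma WeaklyBisimilar.symm {S : LTS Q A} {S' : LTS Q' A}
    (h : WeaklyBisimilar Obs S S') : WeaklyBisimilar Obs S' S := by
  obtain ⟨R, h1, h2⟩ := h
  exact ⟨fun b a => R a b, h2, h1⟩

lemma WeaklyBisimilar.trans {S : LTS Q A} {S' : LTS Q' A} {S'' : LTS Q'' A}
    (h : WeaklyBisimilar Obs S S') (h' : WeaklyBisimilar Obs S' S'') :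
    WeaklyBisimilar Obs S S'' := by
  obtain ⟨R, hR1, hR2⟩ := h
  obtain ⟨R', hR'1, hR'2⟩ := h'
  refine ⟨fun a c => ∃ b, R a b ∧ R' b c, hR1.comp hR'1, ?_⟩
  exact (hR'2.comp hR2).mono (fun c a => by
    constructor
    · rintro ⟨b, h1, h2⟩; exact ⟨b, h2, h1⟩
    · rintro ⟨b, h1, h2⟩; exact ⟨b, h2, h1⟩)

end WeakAux

/-! ## Auxiliary lemmas on nets -/

section NetAux

variable {P Tr : Type _} [DecidableEq P] [DecidableEq Tr]

open PTNet

lemma firesSeq_append {N : PTNet P Tr} :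
    ∀ {s : List Tr} {M M' M'' : P → ℕ}, N.FiresSeq M s M' → N.Fires M' t M'' →
      N.FiresSeq M (s ++ [t]) M''
  | [], M, M', M'', hs, ht => by
      cases hs; exact ⟨M'', ht, rfl⟩
  | u :: s, M, M', M'', hs, ht => by
      obtain ⟨Mm, h1, h2⟩ := hs
      exact ⟨Mm, h1, firesSeq_append h2 ht⟩

lemma firesSeq_det {N : PTNet P Tr} :
    ∀ {s : List Tr} {M M₁ M₂ : P → ℕ}, N.FiresSeq M s M₁ → N.FiresSeq M s M₂ → M₁ = M₂
  | [], M, M₁, M₂, h1, h2 => h1.trans h2.symm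
  | t :: s, M, M₁, M₂, h1, h2 => by
      obtain ⟨Ma, ha, ha'⟩ := h1
      obtain ⟨Mb, hb, hb'⟩ := h2
      rw [ha.2] at ha'
      rw [hb.2] at hb'
      exact firesSeq_det ha' hb'

/-- Re-initialising a weak bisimulation between reachability graphs at a related pair. -/
lemma bisim_reinit {N1 N2 : PTNet P Tr} {Obs : Set Tr} {X Y : P → ℕ}
    {R : (P → ℕ) → (P → ℕ) → Prop}
    (h : IsWeakBisimulation Obs (N1.toLTS X) (N2.toLTS Y) R) {a b : P → ℕ} (hab : R a b) :
    WeaklyBisimilar Obs (N1.toLTS a) (N2.toLTS b) :=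
  ⟨R, ⟨hab, h.1.2⟩, ⟨hab, h.2.2⟩⟩

section TwoLevel

variable {N : PTNet P Tr} {L H : Finset Tr}
  (hT : N.transitions = L ∪ H) (hLH : Disjoint L H)

include hT hLH

lemma mem_restrict_iff {t : Tr} : t ∈ (N.restrict H).transitions ↔ t ∈ L := by
  simp only [PTNet.restrict, Finset.mem_sdiff, hT, Finset.mem_union]
  constructor
  · rintro ⟨h1 | h1, h2⟩
    · exact h1
    · exact absurd h1 h2
  · intro hl
    exact ⟨Or.inl hl, Finset.disjoint_left.mp hLH hl⟩

lemma restrict_pre_eq {l : Tr} (hl : l ∈ L) (p : P) :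
    (N.restrict H).pre l p = N.pre l p := by
  have : l ∈ N.transitions \ H :=
    Finset.mem_sdiff.mpr ⟨hT ▸ Finset.mem_union_left _ hl, Finset.disjoint_left.mp hLH hl⟩
  simp only [PTNet.restrict, if_pos this]

lemma restrict_post_eq {l : Tr} (hl : l ∈ L) (p : P) :
    (N.restrict H).post l p = N.post l p := by
  have : l ∈ N.transitions \ H :=
    Finset.mem_sdiff.mpr ⟨hT ▸ Finset.mem_union_left _ hl, Finset.disjoint_left.mp hLH hl⟩
  simp only [PTNet.restrict, if_pos this]

lemma restrict_fire_eq {l : Tr} (hl : l ∈ L) (M : P → ℕ) :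
    (N.restrict H).fire M l = N.fire M l := by
  funext p
  show (if p ∈ N.places then M p + (N.restrict H).post l p - (N.restrict H).pre l p
      else M p) = _
  rw [restrict_pre_eq hT hLH hl, restrict_post_eq hT hLH hl]
  rfl

lemma restrict_fires_iff {l : Tr} (hl : l ∈ L) {M M' : P → ℕ} :
    (N.restrict H).Fires M l M' ↔ N.Fires M l M' := by
  unfold PTNet.Fires PTNet.Enabled
  rw [restrict_fire_eq hT hLH hl]
  constructor
  · rintro ⟨⟨_, h2⟩, h3⟩
    refine ⟨⟨hT ▸ Finset.mem_union_left _ hl, fun p hp => ?_⟩, h3⟩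
    have := h2 p hp
    rwa [restrict_pre_eq hT hLH hl] at this
  · rintro ⟨⟨_, h2⟩, h3⟩
    refine ⟨⟨(mem_restrict_iff hT hLH).mpr hl, fun p hp => ?_⟩, h3⟩
    rw [restrict_pre_eq hT hLH hl]
    exact h2 p hp

lemma restrict_no_tau {τ : Tr} (hτ : τ ∉ L) {M M' : P → ℕ}
    (h : (N.restrict H).Fires M τ M') : False :=
  hτ ((mem_restrict_iff hT hLH).mp h.1.1)

lemma restrict_tauStar_eq {X a b : P → ℕ}
    (h : ((N.restrict H).toLTS X).TauStar (↑L) a b) : a = b := by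
  induction h with
  | refl => rfl
  | tail _ hstep ih =>
      obtain ⟨τ, hτ, htr⟩ := hstep
      exact absurd htr (fun hf => restrict_no_tau hT hLH (fun hl => hτ hl) hf)

lemma rrel_reachable {M0 M1 M2 : P → ℕ} (h : RRel N M0 L H M1 M2) :
    N.Reachable M0 M2 := by
  induction h with
  | base => exact ⟨[], rfl⟩
  | high hh hr hf ih =>
      obtain ⟨s, hs⟩ := ih
      exact ⟨s ++ [_], firesSeq_append hs hf⟩
  | low hl hr hf1 hf2 ih =>
      obtain ⟨s, hs⟩ := ih
      exact ⟨s ++ [_], firesSeq_append hs hf2⟩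

lemma sbndc_rrel {M0 : P → ℕ} (hS : SBNDC N M0 L H) {M1 M2 : P → ℕ}
    (h : RRel N M0 L H M1 M2) :
    WeaklyBisimilar (↑L) ((N.restrict H).toLTS M1) ((N.restrict H).toLTS M2) := by
  induction h with
  | base => exact weaklyBisimilar_refl _
  | high hh hr hf ih =>
      exact ih.trans (hS _ _ _ (rrel_reachable hT hLH hr) hh hf)
  | @low Ma Mb Ma' Mb' l hl hr hf1 hf2 ih =>
      obtain ⟨B, hB⟩ := ih
      obtain ⟨x, y, z, hx, hy, hz, hXR⟩ :=
        (hB.1.2 _ _ hB.1.1).1 l (Finset.mem_coe.mpr hl) _ hf1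
      have hxe : Mb = x := restrict_tauStar_eq hT hLH hx
      have hyz : y = z := restrict_tauStar_eq hT hLH hz
      subst hxe
      subst hyz
      have hy' : y = Mb' := by
        rw [hy.2, restrict_fire_eq hT hLH hl, hf2.2]
      subst hy'
      exact bisim_reinit hB hXR

end TwoLevel

section CompRestrict

variable {N N' : PTNet P Tr} {H : Finset Tr}

lemma cr_pre {t : Tr} {p : P}
    (ht : t ∈ ((N.comp N').restrict (H \ N'.transitions)).transitions) :
    ((N.comp N').restrict (H \ N'.transitions)).pre t p
      = if p ∈ N.places then N.pre t p else N'.pre t p := by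
  show (if t ∈ (N.comp N').transitions \ (H \ N'.transitions)
      then (N.comp N').pre t p else 0) = _
  have ht' : t ∈ (N.comp N').transitions \ (H \ N'.transitions) := ht
  rw [if_pos ht']
  rfl

lemma cr_post {t : Tr} {p : P}
    (ht : t ∈ ((N.comp N').restrict (H \ N'.transitions)).transitions) :
    ((N.comp N').restrict (H \ N'.transitions)).post t p
      = if p ∈ N.places then N.post t p else N'.post t p := by
  show (if t ∈ (N.comp N').transitions \ (H \ N'.transitions)
      then (N.comp N').post t p else 0) = _
  have ht' : t ∈ (N.comp N').transitions \ (H \ N'.transitions) := ht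
  rw [if_pos ht']
  rfl

lemma mem_cr_iff {t : Tr} :
    t ∈ ((N.comp N').restrict (H \ N'.transitions)).transitions ↔
      (t ∈ N.transitions ∨ t ∈ N'.transitions) ∧ ¬(t ∈ H ∧ t ∉ N'.transitions) := by
  show t ∈ (N.comp N').transitions \ (H \ N'.transitions) ↔ _
  rw [Finset.mem_sdiff, Finset.mem_sdiff]
  show t ∈ N.transitions ∪ N'.transitions ∧ _ ↔ _
  rw [Finset.mem_union]

end CompRestrict

section Main1

variable {N : PTNet P Tr} {M0 : P → ℕ} {L H : Finset Tr}

theorem sbndc_to_bndc (hT : N.transitions = L ∪ H) (hLH : Disjoint L H)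
    (hS : SBNDC N M0 L H) : BNDC N M0 L H := by
  intro N' M0' hdP hdT
  set C := (N.comp N').restrict (H \ N'.transitions) with hCdef
  have hCpl : C.places = N.places ∪ N'.places := rfl
  set proj : (P → ℕ) → P → ℕ := fun Mc => N.combine Mc M0 with hproj
  have hprojdef : ∀ Mc p, proj Mc p = if p ∈ N.places then Mc p else M0 p :=
    fun _ _ => rfl
  -- membership facts
  have hLN : ∀ {l : Tr}, l ∈ L → l ∈ N.transitions :=
    fun hl => hT ▸ Finset.mem_union_left _ hl
  have hLC : ∀ {l : Tr}, l ∈ L → l ∈ C.transitions := by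
    intro l hl
    rw [hCdef, mem_cr_iff]
    exact ⟨Or.inl (hLN hl), fun hc => Finset.disjoint_left.mp hLH hl hc.1⟩
  -- flow facts
  have hpreL0 : ∀ {l : Tr}, l ∈ L → ∀ p, p ∉ N.places → C.pre l p = 0 := by
    intro l hl p hp
    rw [hCdef, cr_pre (hLC hl), if_neg hp]
    exact N'.pre_eq_zero l (Finset.disjoint_right.mp hdT hl) p
  -- enabledness transfer
  have henN : ∀ {t : Tr} {Mc : P → ℕ}, C.Enabled Mc t → t ∈ N.transitions →
      N.Enabled (proj Mc) t := by
    intro t Mc h htN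
    refine ⟨htN, fun p hp => ?_⟩
    have h2 := h.2 p (hCpl ▸ Finset.mem_union_left _ hp)
    rw [hCdef, cr_pre h.1, if_pos hp] at h2
    rw [hprojdef, if_pos hp]
    exact h2
  have henC : ∀ {l : Tr} {Mc : P → ℕ}, l ∈ L → N.Enabled (proj Mc) l →
      C.Enabled Mc l := by
    intro l Mc hl h
    refine ⟨hLC hl, fun p hp => ?_⟩
    by_cases hpN : p ∈ N.places
    · have h2 := h.2 p hpN
      rw [hprojdef, if_pos hpN] at h2
      rw [hCdef, cr_pre (hLC hl), if_pos hpN]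
      exact h2
    · rw [hpreL0 hl p hpN]
      exact Nat.zero_le _
  -- projection of firing
  have hfireN : ∀ {t : Tr} (Mc : P → ℕ), t ∈ C.transitions → t ∈ N.transitions →
      proj (C.fire Mc t) = N.fire (proj Mc) t := by
    intro t Mc htC htN
    funext p
    by_cases hp : p ∈ N.places
    · have hpC : p ∈ C.places := hCpl ▸ Finset.mem_union_left _ hp
      rw [hprojdef, if_pos hp]
      show C.fire Mc t p = N.fire (proj Mc) t p
      rw [PTNet.fire, PTNet.fire, if_pos hpC, if_pos hp, hCdef, cr_pre htC,
        cr_post htC, if_pos hp, if_pos hp, hprojdef, if_pos hp]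
    · rw [hprojdef, if_neg hp, PTNet.fire, if_neg hp, hprojdef, if_neg hp]
  -- initial markings
  have hinit : proj (N.combine M0 M0') = M0 := by
    funext p
    rw [hprojdef]
    by_cases hp : p ∈ N.places
    · rw [if_pos hp]
      show (if p ∈ N.places then M0 p else M0' p) = M0 p
      rw [if_pos hp]
    · rw [if_neg hp]
  refine ⟨fun M1 Mc => RRel N M0 L H M1 (proj Mc), ⟨?_, ?_⟩, ⟨?_, ?_⟩⟩
  · show RRel N M0 L H M0 (proj (N.combine M0 M0'))
    rw [hinit]
    exact RRel.base
  · -- simulation of N\H by C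
    intro M1 Mc hR
    refine ⟨fun σ hσ M1' hf1 => ?_, fun τ hτ M1' hf1 => ?_⟩
    · have hl : σ ∈ L := Finset.mem_coe.mp hσ
      obtain ⟨B, hB⟩ := sbndc_rrel hT hLH hS hR
      obtain ⟨x, y, z, hx, hy, hz, _⟩ := (hB.1.2 _ _ hB.1.1).1 σ hσ _ hf1
      have hxe : proj Mc = x := restrict_tauStar_eq hT hLH hx
      subst hxe
      have hNf : N.Fires (proj Mc) σ y := (restrict_fires_iff hT hLH hl).mp hy
      have henb : C.Enabled Mc σ := henC hl hNf.1
      refine ⟨Mc, C.fire Mc σ, C.fire Mc σ, Relation.ReflTransGen.refl,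
        ⟨henb, rfl⟩, Relation.ReflTransGen.refl, ?_⟩
      show RRel N M0 L H M1' (proj (C.fire Mc σ))
      rw [hfireN Mc (hLC hl) (hLN hl)]
      exact RRel.low hl hR hf1 ⟨hNf.1, rfl⟩
    · exact absurd hf1 (fun hf => restrict_no_tau hT hLH
        (fun hl => hτ (Finset.mem_coe.mpr hl)) hf)
  · show RRel N M0 L H M0 (proj (N.combine M0 M0'))
    rw [hinit]
    exact RRel.base
  · -- simulation of C by N\H
    intro Mc M1 hR
    refine ⟨fun σ hσ Mc' hfC => ?_, fun τ hτ Mc' hfC => ?_⟩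
    · have hl : σ ∈ L := Finset.mem_coe.mp hσ
      have hNen : N.Enabled (proj Mc) σ := henN hfC.1 (hLN hl)
      have hNf : N.Fires (proj Mc) σ (N.fire (proj Mc) σ) := ⟨hNen, rfl⟩
      have hNrf : (N.restrict H).Fires (proj Mc) σ (N.fire (proj Mc) σ) :=
        (restrict_fires_iff hT hLH hl).mpr hNf
      obtain ⟨B, hB⟩ := sbndc_rrel hT hLH hS hR
      obtain ⟨x, y, z, hx, hy, hz, _⟩ := (hB.2.2 _ _ hB.2.1).1 σ hσ _ hNrf
      have hxe : M1 = x := restrict_tauStar_eq hT hLH hx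
      subst hxe
      refine ⟨M1, y, y, Relation.ReflTransGen.refl, hy,
        Relation.ReflTransGen.refl, ?_⟩
      show RRel N M0 L H y (proj Mc')
      have heq : proj Mc' = N.fire (proj Mc) σ := by
        rw [hfC.2, hfireN Mc hfC.1.1 (hLN hl)]
      rw [heq]
      exact RRel.low hl hR hy hNf
    · have hτL : τ ∉ L := fun hl => hτ (Finset.mem_coe.mpr hl)
      by_cases hh : τ ∈ H
      · have htN : τ ∈ N.transitions := hT ▸ Finset.mem_union_right _ hh
        have hNf : N.Fires (proj Mc) τ (proj Mc') := by
          refine ⟨henN hfC.1 htN, ?_⟩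
          rw [hfC.2, hfireN Mc hfC.1.1 htN]
        exact ⟨M1, Relation.ReflTransGen.refl, RRel.high hh hR hNf⟩
      · have htN : τ ∉ N.transitions := by
          rw [hT, Finset.mem_union]
          rintro (h1 | h1)
          · exact hτL h1
          · exact hh h1
        have heq : proj Mc' = proj Mc := by
          funext p
          by_cases hp : p ∈ N.places
          · have hpC : p ∈ C.places := hCpl ▸ Finset.mem_union_left _ hp
            rw [hprojdef, hprojdef, if_pos hp, if_pos hp, hfC.2, PTNet.fire,
              if_pos hpC, hCdef, cr_pre hfC.1.1, cr_post hfC.1.1, if_pos hp,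
              if_pos hp, N.pre_eq_zero τ htN p, N.post_eq_zero τ htN p]
            simp
          · rw [hprojdef, hprojdef, if_neg hp, if_neg hp]
        refine ⟨M1, Relation.ReflTransGen.refl, ?_⟩
        show RRel N M0 L H M1 (proj Mc')
        rw [heq]
        exact hR

end Main1

section AuxNetSec

/-- Auxiliary high-level net: a single fresh place `q` holding a budget of
tokens, each high transition consuming one token. -/
def auxNet (q : P) (H : Finset Tr) : PTNet P Tr where
  places := {q}
  transitions := H
  pre := fun t p => if t ∈ H ∧ p = q then 1 else 0
  post := fun _ _ => 0
  pre_eq_zero := by intro t ht p; simp [ht]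
  post_eq_zero := fun _ _ _ => rfl

/-- The composition of `N` with the auxiliary net, restricted. -/
def compAux (N : PTNet P Tr) (q : P) (H : Finset Tr) : PTNet P Tr :=
  (N.comp (auxNet q H)).restrict (H \ (auxNet q H).transitions)

variable {N : PTNet P Tr} {q : P} {H : Finset Tr}

lemma compAux_places : (compAux N q H).places = N.places ∪ {q} := rfl

lemma mem_compAux {t : Tr} :
    t ∈ (compAux N q H).transitions ↔ t ∈ N.transitions ∨ t ∈ H := by
  rw [compAux, mem_cr_iff]
  show (t ∈ N.transitions ∨ t ∈ H) ∧ ¬(t ∈ H ∧ t ∉ H) ↔ _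
  constructor
  · exact fun h => h.1
  · exact fun h => ⟨h, fun hc => hc.2 hc.1⟩

lemma compAux_pre_mem {t : Tr} {p : P} (ht : t ∈ (compAux N q H).transitions)
    (hp : p ∈ N.places) : (compAux N q H).pre t p = N.pre t p := by
  rw [compAux, cr_pre ht, if_pos hp]

lemma compAux_post_mem {t : Tr} {p : P} (ht : t ∈ (compAux N q H).transitions)
    (hp : p ∈ N.places) : (compAux N q H).post t p = N.post t p := by
  rw [compAux, cr_post ht, if_pos hp]

lemma compAux_pre_q {t : Tr} (hq : q ∉ N.places) (ht : t ∈ (compAux N q H).transitions) :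
    (compAux N q H).pre t q = if t ∈ H then 1 else 0 := by
  rw [compAux, cr_pre ht, if_neg hq]
  show (if t ∈ H ∧ q = q then 1 else 0) = _
  simp

lemma compAux_post_q {t : Tr} (hq : q ∉ N.places) (ht : t ∈ (compAux N q H).transitions) :
    (compAux N q H).post t q = 0 := by
  rw [compAux, cr_post ht, if_neg hq]
  rfl

lemma compAux_fire_mem {t : Tr} {p : P} (ht : t ∈ (compAux N q H).transitions)
    (hp : p ∈ N.places) (M : P → ℕ) :
    (compAux N q H).fire M t p = M p + N.post t p - N.pre t p := by
  have hpC : p ∈ (compAux N q H).places := by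
    rw [compAux_places]; exact Finset.mem_union_left _ hp
  rw [PTNet.fire, if_pos hpC, compAux_pre_mem ht hp, compAux_post_mem ht hp]

lemma compAux_fire_q {t : Tr} (hq : q ∉ N.places) (ht : t ∈ (compAux N q H).transitions)
    (M : P → ℕ) :
    (compAux N q H).fire M t q = M q - (if t ∈ H then 1 else 0) := by
  have hqC : q ∈ (compAux N q H).places := by
    rw [compAux_places]; exact Finset.mem_union_right _ (Finset.mem_singleton_self q)
  rw [PTNet.fire, if_pos hqC, compAux_pre_q hq ht, compAux_post_q hq ht]
  simp

lemma filter_cons_length (t : Tr) (s : List Tr) :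
    ((t :: s).filter (· ∈ H)).length
      = (if t ∈ H then 1 else 0) + (s.filter (· ∈ H)).length := by
  by_cases h : t ∈ H <;> simp [List.filter_cons, h, Nat.add_comm]

/-- Lifting a firing sequence of `N` to the composed system, consuming the budget. -/
lemma liftSeq (hq : q ∉ N.places) :
    ∀ (s : List Tr) (M M' Mc : P → ℕ), N.FiresSeq M s M' →
      (∀ p ∈ N.places, Mc p = M p) → Mc q = (s.filter (· ∈ H)).length →
      ∃ Mc', (compAux N q H).FiresSeq Mc s Mc' ∧
        (∀ p ∈ N.places, Mc' p = M' p) ∧ Mc' q = 0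
  | [], M, M', Mc, hseq, hag, hqv => by
      refine ⟨Mc, rfl, fun p hp => ?_, by simpa using hqv⟩
      rw [hag p hp, hseq]
  | t :: s, M, M', Mc, hseq, hag, hqv => by
      obtain ⟨Mm, hft, hrest⟩ := hseq
      have htC : t ∈ (compAux N q H).transitions := mem_compAux.mpr (Or.inl hft.1.1)
      have hen : (compAux N q H).Enabled Mc t := by
        refine ⟨htC, fun p hp => ?_⟩
        rw [compAux_places] at hp
        rcases Finset.mem_union.mp hp with hpN | hpq
        · rw [compAux_pre_mem htC hpN, hag p hpN]
          exact hft.1.2 p hpN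
        · have hpe : p = q := Finset.mem_singleton.mp hpq
          subst hpe
          rw [compAux_pre_q hq htC, hqv, filter_cons_length]
          by_cases hth : t ∈ H <;> simp [hth]
      set Mc₁ := (compAux N q H).fire Mc t with hMc₁
      have hag₁ : ∀ p ∈ N.places, Mc₁ p = Mm p := by
        intro p hp
        rw [hMc₁, compAux_fire_mem htC hp, hag p hp, hft.2, PTNet.fire, if_pos hp]
      have hqv₁ : Mc₁ q = (s.filter (· ∈ H)).length := by
        rw [hMc₁, compAux_fire_q hq htC, hqv, filter_cons_length]
        by_cases hth : t ∈ H <;> simp [hth]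
      obtain ⟨Mc', h1, h2, h3⟩ := liftSeq hq s Mm M' Mc₁ hrest hag₁ hqv₁
      exact ⟨Mc', ⟨Mc₁, ⟨hen, rfl⟩, h1⟩, h2, h3⟩

end AuxNetSec

section Main2

variable {N : PTNet P Tr} {M0 : P → ℕ} {L H : Finset Tr}

/-- Tracking a run of a composed system through a weak bisimulation with `N \ H`. -/
lemma track (hT : N.transitions = L ∪ H) (hLH : Disjoint L H)
    {C' : PTNet P Tr} {X : P → ℕ} {R : (P → ℕ) → (P → ℕ) → Prop}
    (hR : IsWeakBisimulation (↑L) ((N.restrict H).toLTS M0) (C'.toLTS X) R) :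
    ∀ (s : List Tr) (Mc Mc' Mn : P → ℕ), C'.FiresSeq Mc s Mc' → R Mn Mc →
      ∃ Mn', (N.restrict H).FiresSeq Mn (s.filter (· ∈ L)) Mn' ∧ R Mn' Mc'
  | [], Mc, Mc', Mn, hseq, hRmn => by
      refine ⟨Mn, rfl, ?_⟩
      rw [hseq]
      exact hRmn
  | t :: s, Mc, Mc', Mn, hseq, hRmn => by
      obtain ⟨Mm, hft, hrest⟩ := hseq
      by_cases htL : t ∈ L
      · obtain ⟨x, y, z, hx, hy, hz, hXR⟩ :=
          (hR.2.2 _ _ hRmn).1 t (Finset.mem_coe.mpr htL) _ hft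
        have hxe : Mn = x := restrict_tauStar_eq hT hLH hx
        subst hxe
        have hyz : y = z := restrict_tauStar_eq hT hLH hz
        subst hyz
        obtain ⟨Mn', h1, h2⟩ := track hT hLH hR s Mm Mc' y hrest hXR
        refine ⟨Mn', ?_, h2⟩
        have hfe : (t :: s).filter (· ∈ L) = t :: s.filter (· ∈ L) := by
          simp [List.filter_cons, htL]
        rw [hfe]
        exact ⟨y, hy, h1⟩
      · obtain ⟨z, hz, hXR⟩ :=
          (hR.2.2 _ _ hRmn).2 t (fun hc => htL (Finset.mem_coe.mp hc)) _ hft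
        have hze : Mn = z := restrict_tauStar_eq hT hLH hz
        subst hze
        obtain ⟨Mn', h1, h2⟩ := track hT hLH hR s Mm Mc' Mn hrest hXR
        refine ⟨Mn', ?_, h2⟩
        have hfe : (t :: s).filter (· ∈ L) = s.filter (· ∈ L) := by
          simp [List.filter_cons, htL]
        rw [hfe]
        exact h1

/-- With an empty budget, the composed system is weakly bisimilar to `N \ H`. -/
lemma ce (hT : N.transitions = L ∪ H) (hLH : Disjoint L H) {q : P} (hq : q ∉ N.places)
    {Ma Mc : P → ℕ} (hag : ∀ p ∈ N.places, Mc p = Ma p) (hq0 : Mc q = 0) :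
    WeaklyBisimilar (↑L) ((N.restrict H).toLTS Ma) ((compAux N q H).toLTS Mc) := by
  set E : (P → ℕ) → (P → ℕ) → Prop :=
    fun x y => (∀ p ∈ N.places, y p = x p) ∧ y q = 0 with hE
  have hforward : ∀ x y, E x y → ∀ σ ∈ (↑L : Set Tr), ∀ x',
      (N.restrict H).Fires x σ x' →
      ∃ y', (compAux N q H).Fires y σ y' ∧ E x' y' := by
    intro x y hExy σ hσ x' hf
    have hl : σ ∈ L := Finset.mem_coe.mp hσ
    have hlN : σ ∈ N.transitions := hT ▸ Finset.mem_union_left _ hl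
    have hlH : σ ∉ H := Finset.disjoint_left.mp hLH hl
    have htC : σ ∈ (compAux N q H).transitions := mem_compAux.mpr (Or.inl hlN)
    have hen : (compAux N q H).Enabled y σ := by
      refine ⟨htC, fun p hp => ?_⟩
      rw [compAux_places] at hp
      rcases Finset.mem_union.mp hp with hpN | hpq
      · rw [compAux_pre_mem htC hpN, hExy.1 p hpN]
        have := hf.1.2 p hpN
        rwa [restrict_pre_eq hT hLH hl] at this
      · have hpe : p = q := Finset.mem_singleton.mp hpq
        subst hpe
        rw [compAux_pre_q hq htC, if_neg hlH]
        exact Nat.zero_le _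
    refine ⟨(compAux N q H).fire y σ, ⟨hen, rfl⟩, ⟨fun p hp => ?_, ?_⟩⟩
    · rw [compAux_fire_mem htC hp, hExy.1 p hp, hf.2, restrict_fire_eq hT hLH hl,
        PTNet.fire, if_pos hp]
    · rw [compAux_fire_q hq htC, if_neg hlH, hExy.2]
  have hbackward : ∀ x y, E x y → ∀ σ ∈ (↑L : Set Tr), ∀ y',
      (compAux N q H).Fires y σ y' →
      ∃ x', (N.restrict H).Fires x σ x' ∧ E x' y' := by
    intro x y hExy σ hσ y' hf
    have hl : σ ∈ L := Finset.mem_coe.mp hσ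
    have hlN : σ ∈ N.transitions := hT ▸ Finset.mem_union_left _ hl
    have hlH : σ ∉ H := Finset.disjoint_left.mp hLH hl
    have hen : (N.restrict H).Enabled x σ := by
      refine ⟨(mem_restrict_iff hT hLH).mpr hl, fun p hp => ?_⟩
      rw [restrict_pre_eq hT hLH hl]
      have := hf.1.2 p (by rw [compAux_places]; exact Finset.mem_union_left _ hp)
      rw [compAux_pre_mem hf.1.1 hp, hExy.1 p hp] at this
      exact this
    refine ⟨(N.restrict H).fire x σ, ⟨hen, rfl⟩, ⟨fun p hp => ?_, ?_⟩⟩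
    · rw [hf.2, compAux_fire_mem hf.1.1 hp, hExy.1 p hp, restrict_fire_eq hT hLH hl,
        PTNet.fire, if_pos hp]
    · rw [hf.2, compAux_fire_q hq hf.1.1, if_neg hlH, hExy.2]
  refine ⟨E, ⟨⟨hag, hq0⟩, ?_⟩, ⟨⟨hag, hq0⟩, ?_⟩⟩
  · intro x y hExy
    refine ⟨fun σ hσ x' hf => ?_, fun τ hτ x' hf => ?_⟩
    · obtain ⟨y', hfy, hE'⟩ := hforward x y hExy σ hσ x' hf
      exact ⟨y, y', y', Relation.ReflTransGen.refl, hfy, Relation.ReflTransGen.refl, hE'⟩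
    · exact absurd hf (fun hff => restrict_no_tau hT hLH
        (fun hl => hτ (Finset.mem_coe.mpr hl)) hff)
  · intro y x hExy
    refine ⟨fun σ hσ y' hf => ?_, fun τ hτ y' hf => ?_⟩
    · obtain ⟨x', hfx, hE'⟩ := hbackward x y hExy σ hσ y' hf
      exact ⟨x, x', x', Relation.ReflTransGen.refl, hfx, Relation.ReflTransGen.refl, hE'⟩
    · -- no unobservable transition is enabled with empty budget
      exfalso
      have hτL : τ ∉ L := fun hl => hτ (Finset.mem_coe.mpr hl)
      have hτH : τ ∈ H := by
        rcases mem_compAux.mp hf.1.1 with h1 | h1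
        · rcases Finset.mem_union.mp (hT ▸ h1) with h2 | h2
          · exact absurd h2 hτL
          · exact h2
        · exact h1
      have := hf.1.2 q
        (by rw [compAux_places]; exact Finset.mem_union_right _ (Finset.mem_singleton_self q))
      rw [compAux_pre_q hq hf.1.1, if_pos hτH, hExy.2] at this
      exact Nat.not_succ_le_zero 0 this

theorem bndc_to_sbndc [Infinite P] (hT : N.transitions = L ∪ H) (hLH : Disjoint L H)
    (hB : BNDC N M0 L H) : SBNDC N M0 L H := by
  intro M1 h M2 hreach hh hfire
  obtain ⟨w, hw⟩ := hreach
  obtain ⟨q, hq⟩ := Infinite.exists_notMem_finset N.places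
  have hdP : Disjoint N.places (auxNet (Tr := Tr) q H).places :=
    Finset.disjoint_singleton_right.mpr hq
  have hdT : Disjoint (auxNet (P := P) q H).transitions L := hLH.symm
  set k := (w.filter (· ∈ H)).length with hk
  obtain ⟨R₁, hR₁⟩ := hB (auxNet q H) (fun _ => k) hdP hdT
  obtain ⟨R₂, hR₂⟩ := hB (auxNet q H) (fun _ => k + 1) hdP hdT
  have hcomb : ∀ (m : ℕ), ∀ p ∈ N.places, N.combine M0 (fun _ => m) p = M0 p :=
    fun m p hp => if_pos hp
  have hcombq : ∀ m : ℕ, N.combine M0 (fun _ => m) q = m := fun m => if_neg hq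
  -- lift the two runs to the composed systems
  obtain ⟨Mc1, hseq1, hag1, hq1⟩ :=
    liftSeq hq w M0 M1 (N.combine M0 (fun _ => k)) hw (hcomb k) (hcombq k)
  have hwh : N.FiresSeq M0 (w ++ [h]) M2 := firesSeq_append hw hfire
  have hlen2 : N.combine M0 (fun _ => k + 1) q = ((w ++ [h]).filter (· ∈ H)).length := by
    rw [hcombq]
    simp [hk, hh]
  obtain ⟨Mc2, hseq2, hag2, hq2⟩ :=
    liftSeq hq (w ++ [h]) M0 M2 (N.combine M0 (fun _ => k + 1)) hwh
      (hcomb (k + 1)) hlen2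
  -- track the runs through the bisimulations
  obtain ⟨Mn, htr1, hRn1⟩ := track hT hLH hR₁ w _ Mc1 M0 hseq1 hR₁.1.1
  obtain ⟨Mn2, htr2, hRn2⟩ := track hT hLH hR₂ (w ++ [h]) _ Mc2 M0 hseq2 hR₂.1.1
  have hfeq : (w ++ [h]).filter (· ∈ L) = w.filter (· ∈ L) := by
    have : h ∉ L := Finset.disjoint_right.mp hLH hh
    simp [this]
  rw [hfeq] at htr2
  have hMn : Mn2 = Mn := firesSeq_det htr2 htr1
  subst hMn
  have B1 := ce hT hLH hq hag1 hq1
  have B2 := ce hT hLH hq hag2 hq2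
  have B1' := bisim_reinit hR₁ hRn1
  have B2' := bisim_reinit hR₂ hRn2
  exact (B1.trans B1'.symm).trans ((B2.trans B2'.symm).symm)

end Main2

end NetAux

/-- a two-level net system has BNDC iff it has SBNDC. -/
theorem bndc_iff_sbndc
    {P Tr : Type _} [DecidableEq P] [DecidableEq Tr] [Infinite P]
    (N : PTNet P Tr) (M0 : P → ℕ) (L H : Finset Tr)
    (hT : N.transitions = L ∪ H) (hLH : Disjoint L H) :
    BNDC N M0 L H ↔ SBNDC N M0 L H :=
  ⟨bndc_to_sbndc hT hLH, sbndc_to_bndc hT hLH⟩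
end

section
/- A two-level PT-net system N with T = L ∪ H has the property SBNDC if and only if P(h,l) holds for every high-level transition h ∈ H and every low-level transition l ∈ L. -/
namespace SBNDCAux

variable {P Tr : Type _} [DecidableEq P] [DecidableEq Tr]

lemma mem_of_firesSeq {N : PTNet P Tr} :
    ∀ {s : List Tr} {M M' : P → ℕ}, N.FiresSeq M s M' → ∀ t ∈ s, t ∈ N.transitions := by
  intro s
  induction s with
  | nil => intro M M' _ t ht; simp at ht
  | cons a s ih =>
    rintro M M' ⟨M'', hf, hs⟩ t ht
    rcases List.mem_cons.mp ht with rfl | ht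
    · exact hf.1.1
    · exact ih hs t ht

lemma fires_deterministic {N : PTNet P Tr} {M M1 M2 : P → ℕ} {t : Tr}
    (h1 : N.Fires M t M1) (h2 : N.Fires M t M2) : M1 = M2 := by
  rw [h1.2, h2.2]

lemma firesSeq_deterministic {N : PTNet P Tr} :
    ∀ {s : List Tr} {M M1 M2 : P → ℕ},
      N.FiresSeq M s M1 → N.FiresSeq M s M2 → M1 = M2 := by
  intro s
  induction s with
  | nil =>
    intro M M1 M2 h1 h2
    have e1 : M1 = M := h1
    have e2 : M2 = M := h2
    rw [e1, e2]
  | cons a s ih =>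
    rintro M M1 M2 ⟨Ma, hfa, hsa⟩ ⟨Mb, hfb, hsb⟩
    cases fires_deterministic hfa hfb
    exact ih hsa hsb

lemma firesSeq_append_single {N : PTNet P Tr} :
    ∀ {s : List Tr} {M M' M'' : P → ℕ} {t : Tr},
      N.FiresSeq M s M' → N.Fires M' t M'' → N.FiresSeq M (s ++ [t]) M'' := by
  intro s
  induction s with
  | nil =>
    intro M M' M'' t h1 h2
    have e : M' = M := h1
    subst e
    exact ⟨M'', h2, rfl⟩
  | cons a s ih =>
    rintro M M' M'' t ⟨Ma, hf, hs⟩ h2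
    exact ⟨Ma, hf, ih hs h2⟩

lemma mem_sdiff_of_L {N : PTNet P Tr} {L H : Finset Tr}
    (hT : N.transitions = L ∪ H) (hLH : Disjoint L H) {l : Tr} (hl : l ∈ L) :
    l ∈ N.transitions \ H :=
  Finset.mem_sdiff.mpr ⟨hT ▸ Finset.mem_union_left _ hl, Finset.disjoint_left.mp hLH hl⟩

lemma restrict_transitions {N : PTNet P Tr} {L H : Finset Tr}
    (hT : N.transitions = L ∪ H) (hLH : Disjoint L H) :
    (N.restrict H).transitions = L := by
  ext t
  simp only [PTNet.restrict, hT, Finset.mem_sdiff, Finset.mem_union]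
  constructor
  · rintro ⟨h1 | h1, h2⟩
    · exact h1
    · exact absurd h1 h2
  · intro h; exact ⟨Or.inl h, Finset.disjoint_left.mp hLH h⟩

lemma enabled_restrict {N : PTNet P Tr} {H : Finset Tr} {M : P → ℕ} {l : Tr}
    (hmem : l ∈ N.transitions \ H) :
    (N.restrict H).Enabled M l ↔ N.Enabled M l := by
  constructor
  · rintro ⟨_, h2⟩
    exact ⟨(Finset.mem_sdiff.mp hmem).1,
      fun p hp => by simpa [PTNet.restrict, (Finset.mem_sdiff.mp hmem).1, (Finset.mem_sdiff.mp hmem).2] using h2 p hp⟩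
  · rintro ⟨_, h2⟩
    exact ⟨hmem, fun p hp => by simpa [PTNet.restrict, (Finset.mem_sdiff.mp hmem).1, (Finset.mem_sdiff.mp hmem).2] using h2 p hp⟩

lemma fire_restrict {N : PTNet P Tr} {H : Finset Tr} {M : P → ℕ} {l : Tr}
    (hmem : l ∈ N.transitions \ H) :
    (N.restrict H).fire M l = N.fire M l := by
  funext p
  unfold PTNet.fire PTNet.restrict
  simp only [hmem, if_true]

lemma fires_restrict {N : PTNet P Tr} {H : Finset Tr} {M M' : P → ℕ} {l : Tr}
    (hmem : l ∈ N.transitions \ H) :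
    (N.restrict H).Fires M l M' ↔ N.Fires M l M' := by
  unfold PTNet.Fires
  rw [enabled_restrict hmem, fire_restrict hmem]

lemma firesSeq_restrict {N : PTNet P Tr} {L H : Finset Tr}
    (hT : N.transitions = L ∪ H) (hLH : Disjoint L H) :
    ∀ {s : List Tr} {M M' : P → ℕ}, (∀ t ∈ s, t ∈ L) →
      ((N.restrict H).FiresSeq M s M' ↔ N.FiresSeq M s M') := by
  intro s
  induction s with
  | nil => intro M M' _; exact Iff.rfl
  | cons a s ih =>
    intro M M' hmem
    have ha : a ∈ N.transitions \ H :=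
      mem_sdiff_of_L hT hLH (hmem a (List.mem_cons_self (a := a) (l := s)))
    constructor
    · rintro ⟨Ma, hf, hs⟩
      exact ⟨Ma, (fires_restrict ha).mp hf,
        (ih (fun t ht => hmem t (List.mem_cons_of_mem _ ht))).mp hs⟩
    · rintro ⟨Ma, hf, hs⟩
      exact ⟨Ma, (fires_restrict ha).mpr hf,
        (ih (fun t ht => hmem t (List.mem_cons_of_mem _ ht))).mpr hs⟩

lemma tauStar_eq {N : PTNet P Tr} {L H : Finset Tr} {I : P → ℕ}
    (hT : N.transitions = L ∪ H) (hLH : Disjoint L H) {M M' : P → ℕ}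
    (h : ((N.restrict H).toLTS I).TauStar (L : Set Tr) M M') : M = M' := by
  induction h with
  | refl => rfl
  | tail _ hstep ih =>
    obtain ⟨τ, hτ, htr⟩ := hstep
    exfalso
    apply hτ
    have : τ ∈ (N.restrict H).transitions := htr.1.1
    rw [restrict_transitions hT hLH] at this
    exact Finset.mem_coe.mpr this

lemma strong_of_weak {N : PTNet P Tr} {L H : Finset Tr}
    (hT : N.transitions = L ∪ H) (hLH : Disjoint L H)
    {R : (P → ℕ) → (P → ℕ) → Prop} {I1 I2 : P → ℕ}
    (hsim : IsWeakSimulation (L : Set Tr) ((N.restrict H).toLTS I1)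
      ((N.restrict H).toLTS I2) R) :
    ∀ q1 q1', R q1 q1' → ∀ σ ∈ L, ∀ q2, (N.restrict H).Fires q1 σ q2 →
      ∃ q2', (N.restrict H).Fires q1' σ q2' ∧ R q2 q2' := by
  intro q1 q1' hR σ hσ q2 htr
  obtain ⟨o, _⟩ := hsim.2 q1 q1' hR
  obtain ⟨q1'', q2'', q2', ht1, htr', ht2, hR'⟩ :=
    o σ (Finset.mem_coe.mpr hσ) q2 htr
  obtain rfl := tauStar_eq hT hLH ht1
  obtain rfl := tauStar_eq hT hLH ht2
  exact ⟨q2'', htr', hR'⟩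

lemma transfer {N : PTNet P Tr} {L H : Finset Tr}
    (hT : N.transitions = L ∪ H) (hLH : Disjoint L H)
    {R : (P → ℕ) → (P → ℕ) → Prop}
    (hstep : ∀ q1 q1', R q1 q1' → ∀ σ ∈ L, ∀ q2, (N.restrict H).Fires q1 σ q2 →
      ∃ q2', (N.restrict H).Fires q1' σ q2' ∧ R q2 q2') :
    ∀ (s : List Tr) (Ma Mb Mc : P → ℕ), (∀ t ∈ s, t ∈ L) →
      N.FiresSeq Ma s Mc → R Ma Mb →
      ∃ Md, N.FiresSeq Mb s Md ∧ R Mc Md := by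
  intro s
  induction s with
  | nil =>
    intro Ma Mb Mc _ hseq hR
    have e : Mc = Ma := hseq
    subst e
    exact ⟨Mb, rfl, hR⟩
  | cons a s ih =>
    rintro Ma Mb Mc hmem ⟨Ma', hfa, hsa⟩ hR
    have ha : a ∈ L := hmem a (List.mem_cons_self (a := a) (l := s))
    have hamem := mem_sdiff_of_L hT hLH ha
    have hfa' : (N.restrict H).Fires Ma a Ma' := (fires_restrict hamem).mpr hfa
    obtain ⟨Mb', hfb, hR'⟩ := hstep Ma Mb hR a ha Ma' hfa'
    obtain ⟨Md, hsd, hRd⟩ :=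
      ih Ma' Mb' Mc (fun t ht => hmem t (List.mem_cons_of_mem _ ht)) hsa hR'
    exact ⟨Md, ⟨Mb', (fires_restrict hamem).mp hfb, hsd⟩, hRd⟩

end SBNDCAux

open SBNDCAux in
/-- a two-level net system has SBNDC iff `P(h,l)` holds for every
`h ∈ H` and every `l ∈ L`. -/
theorem sbndc_iff_propP
    {P Tr : Type _} [DecidableEq P] [DecidableEq Tr]
    (N : PTNet P Tr) (M0 : P → ℕ) (L H : Finset Tr)
    (hT : N.transitions = L ∪ H) (hLH : Disjoint L H) :
    SBNDC N M0 L H ↔ ∀ h ∈ H, ∀ l ∈ L, PropP N M0 L H h l := by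
  constructor
  · -- SBNDC → PropP
    intro hS h hh l hl
    intro w s M1 M2 M3 M4 _ hsL hM0w hM1h hM1s hM2s
    obtain ⟨R, sim1, sim2⟩ := hS M1 h M2 ⟨w, hM0w⟩ hh hM1h
    have hR12 : R M1 M2 := sim1.1
    have step1 := strong_of_weak hT hLH sim1
    have step2 := strong_of_weak hT hLH sim2
    obtain ⟨M4', h4', hR34⟩ := transfer hT hLH step1 s M1 M2 M3 hsL hM1s hR12
    rw [firesSeq_deterministic h4' hM2s] at hR34
    have hlmem := mem_sdiff_of_L hT hLH hl
    constructor
    · intro hEn3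
      have hf3 : (N.restrict H).Fires M3 l ((N.restrict H).fire M3 l) :=
        ⟨(enabled_restrict hlmem).mpr hEn3, rfl⟩
      obtain ⟨q2', hf4, _⟩ := step1 M3 M4 hR34 l hl _ hf3
      exact (enabled_restrict hlmem).mp hf4.1
    · intro hEn4
      have hf4 : (N.restrict H).Fires M4 l ((N.restrict H).fire M4 l) :=
        ⟨(enabled_restrict hlmem).mpr hEn4, rfl⟩
      obtain ⟨q2', hf3, _⟩ := step2 M4 M3 hR34 l hl _ hf4
      exact (enabled_restrict hlmem).mp hf3.1
  · -- PropP → SBNDC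
    intro hP M1 h M2 hreach hh hM1h
    obtain ⟨w, hw⟩ := hreach
    have hwmem : ∀ t ∈ w, t ∈ L ∪ H := fun t ht => hT ▸ mem_of_firesSeq hw t ht
    set R : (P → ℕ) → (P → ℕ) → Prop := fun Ma Mb =>
      ∃ s, (∀ t ∈ s, t ∈ L) ∧ N.FiresSeq M1 s Ma ∧ N.FiresSeq M2 s Mb with hRdef
    have hinit : R M1 M2 := ⟨[], by simp, rfl, rfl⟩
    -- tau steps are impossible in the restricted net
    have notau : ∀ τ, τ ∉ (L : Set Tr) → ∀ q q2 : P → ℕ,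
        (N.restrict H).Fires q τ q2 → False := by
      intro τ hτ q q2 htr
      apply hτ
      have : τ ∈ (N.restrict H).transitions := htr.1.1
      rw [restrict_transitions hT hLH] at this
      exact Finset.mem_coe.mpr this
    -- enabledness transfer via PropP
    have key : ∀ σ ∈ L, ∀ (s : List Tr) (Ma Mb : P → ℕ),
        (∀ t ∈ s, t ∈ L) → N.FiresSeq M1 s Ma → N.FiresSeq M2 s Mb →
        (N.Enabled Ma σ ↔ N.Enabled Mb σ) := by
      intro σ hσ s Ma Mb hsL h1s h2s
      exact hP h hh σ hσ w s M1 M2 Ma Mb hwmem hsL hw hM1h h1s h2s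
    refine ⟨R, ⟨hinit, ?_⟩, ⟨hinit, ?_⟩⟩
    · -- simulation of S1 by S2
      intro q1 q1' hR
      obtain ⟨s, hsL, h1s, h2s⟩ := hR
      constructor
      · intro σ hσ' q2 htr
        have hσ : σ ∈ L := Finset.mem_coe.mp hσ'
        have hσmem := mem_sdiff_of_L hT hLH hσ
        have hfN : N.Fires q1 σ q2 := (fires_restrict hσmem).mp htr
        have hEn' : N.Enabled q1' σ := (key σ hσ s q1 q1' hsL h1s h2s).mp hfN.1
        have hf' : N.Fires q1' σ (N.fire q1' σ) := ⟨hEn', rfl⟩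
        refine ⟨q1', N.fire q1' σ, N.fire q1' σ,
          Relation.ReflTransGen.refl, (fires_restrict hσmem).mpr hf',
          Relation.ReflTransGen.refl, ?_⟩
        exact ⟨s ++ [σ], by
            intro t ht
            rcases List.mem_append.mp ht with ht | ht
            · exact hsL t ht
            · simp at ht; subst ht; exact hσ,
          firesSeq_append_single h1s hfN, firesSeq_append_single h2s hf'⟩
      · intro τ hτ q2 htr
        exact (notau τ hτ q1 q2 htr).elim
    · -- simulation of S2 by S1
      intro q1 q1' hR
      obtain ⟨s, hsL, h1s, h2s⟩ := hR
      constructor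
      · intro σ hσ' q2 htr
        have hσ : σ ∈ L := Finset.mem_coe.mp hσ'
        have hσmem := mem_sdiff_of_L hT hLH hσ
        have hfN : N.Fires q1 σ q2 := (fires_restrict hσmem).mp htr
        have hEn' : N.Enabled q1' σ := (key σ hσ s q1' q1 hsL h1s h2s).mpr hfN.1
        have hf' : N.Fires q1' σ (N.fire q1' σ) := ⟨hEn', rfl⟩
        refine ⟨q1', N.fire q1' σ, N.fire q1' σ,
          Relation.ReflTransGen.refl, (fires_restrict hσmem).mpr hf',
          Relation.ReflTransGen.refl, ?_⟩
        exact ⟨s ++ [σ], by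
            intro t ht
            rcases List.mem_append.mp ht with ht | ht
            · exact hsL t ht
            · simp at ht; subst ht; exact hσ,
          firesSeq_append_single h1s hf', firesSeq_append_single h2s hfN⟩
      · intro τ hτ q2 htr
        exact (notau τ hτ q1 q2 htr).elim
end

section
/- Let N be a two-level PT-net system with place set P, transition set T = L ∪ H, flow F and initial marking M0, and fix h ∈ H and l ∈ L. Construct the PT-net system N' as follows: N₁ is a copy of N on a fresh place set P1 (with the same transition names) augmented with a new transition l1' that acts on P1 exactly as l does; N₂ is a copy of N on a fresh place set P2 disjoint from P1 augmented with a new transition l2' acting on P2 exactly as l does and a new transition h' acting on P2 exactly as h does; N' is the composition N₁|N₂ (so the transitions of T are synchronized between the two copies) augmented with two fresh places x and y, extending the flow by (a) F'(x,t) = F'(t,x) = 1 for every t ∈ H, and (b) F'(x,h') = 1, F'(h',y) = 1, F'(y,l1') = 1, F'(y,l2') = 1; initially x carries one token, y carries zero tokens, and each copy of the places carries M0. Then P(h,l) holds in N if and only if no marking M' reachable in N' satisfies (M'[l1'⟩ and not M'[l2'⟩) or (not M'[l1'⟩ and M'[l2'⟩). -/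
/-! The construction of the net `N'` used to decide `P(h,l)`: two copies of `N`
(on the fresh place sets `P1` = left copy and `P2` = right copy) synchronized on
the transitions of `N`, with extra local transitions `l1'` (acting on `P1` as
`l`), `l2'` (acting on `P2` as `l`) and `h'` (acting on `P2` as `h`), and two
extra places `x` (with a side-condition loop on all transitions of `H`,
consumed by `h'`) and `y` (produced by `h'`, consumed by `l1'` and `l2'`). -/

namespace Gadget13

variable {P Tr : Type _} [DecidableEq P] [DecidableEq Tr]

/-- `l1' = Sum.inr 0`, `l2' = Sum.inr 1`, `h' = Sum.inr 2`;
places: `Sum.inl p ∈ P1`, `Sum.inr (Sum.inl p) ∈ P2`,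
`x = Sum.inr (Sum.inr true)`, `y = Sum.inr (Sum.inr false)`. -/
def net (N : PTNet P Tr) (H : Finset Tr) (h l : Tr) :
    PTNet (P ⊕ P ⊕ Bool) (Tr ⊕ Fin 3) where
  places :=
    N.places.image Sum.inl ∪ N.places.image (fun p => Sum.inr (Sum.inl p)) ∪
      {Sum.inr (Sum.inr true), Sum.inr (Sum.inr false)}
  transitions := N.transitions.image Sum.inl ∪ {Sum.inr 0, Sum.inr 1, Sum.inr 2}
  pre :=
    Sum.elim
      (fun u =>
        if u ∈ N.transitions then
          Sum.elim (fun p => N.pre u p)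
            (Sum.elim (fun p => N.pre u p)
              (fun b => if b then (if u ∈ H then 1 else 0) else 0))
        else fun _ => 0)
      (fun i =>
        if i = 0 then
          Sum.elim (fun p => N.pre l p)
            (Sum.elim (fun _ => 0) (fun b => if b then 0 else 1))
        else if i = 1 then
          Sum.elim (fun _ => 0)
            (Sum.elim (fun p => N.pre l p) (fun b => if b then 0 else 1))
        else
          Sum.elim (fun _ => 0)
            (Sum.elim (fun p => N.pre h p) (fun b => if b then 1 else 0)))
  post :=
    Sum.elim
      (fun u =>
        if u ∈ N.transitions then
          Sum.elim (fun p => N.post u p)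
            (Sum.elim (fun p => N.post u p)
              (fun b => if b then (if u ∈ H then 1 else 0) else 0))
        else fun _ => 0)
      (fun i =>
        if i = 0 then
          Sum.elim (fun p => N.post l p)
            (Sum.elim (fun _ => 0) (fun _ => 0))
        else if i = 1 then
          Sum.elim (fun _ => 0)
            (Sum.elim (fun p => N.post l p) (fun _ => 0))
        else
          Sum.elim (fun _ => 0)
            (Sum.elim (fun p => N.post h p) (fun b => if b then 0 else 1)))
  pre_eq_zero := by
    intro t ht q
    rcases t with u | i
    · have hu : u ∉ N.transitions := fun hc =>
        ht (Finset.mem_union_left _ (Finset.mem_image_of_mem _ hc))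
      simp [hu]
    · exfalso
      apply ht
      have h3 : i = 0 ∨ i = 1 ∨ i = 2 := by omega
      rcases h3 with rfl | rfl | rfl <;> simp
  post_eq_zero := by
    intro t ht q
    rcases t with u | i
    · have hu : u ∉ N.transitions := fun hc =>
        ht (Finset.mem_union_left _ (Finset.mem_image_of_mem _ hc))
      simp [hu]
    · exfalso
      apply ht
      have h3 : i = 0 ∨ i = 1 ∨ i = 2 := by omega
      rcases h3 with rfl | rfl | rfl <;> simp

/-- The initial marking of the constructed net: `M0` on each copy of the places
of `N`, one token on `x` and none on `y`. -/
def init (M0 : P → ℕ) : P ⊕ P ⊕ Bool → ℕ :=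
  Sum.elim M0 (Sum.elim M0 (fun b => if b then 1 else 0))

end Gadget13


/-! ### Auxiliary development for Statement 13 -/

namespace Gadget13Aux

set_option linter.unusedSectionVars false

open Gadget13

variable {P Tr : Type _} [DecidableEq P] [DecidableEq Tr]
variable (N : PTNet P Tr) (H : Finset Tr) (h l : Tr)

/-- Projection to the left copy of the places. -/
def pi1 (M : P ⊕ P ⊕ Bool → ℕ) : P → ℕ := fun p => M (Sum.inl p)

/-- Projection to the right copy of the places. -/
def pi2 (M : P ⊕ P ⊕ Bool → ℕ) : P → ℕ := fun p => M (Sum.inr (Sum.inl p))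

theorem firesSeq_append {N : PTNet P Tr} {M M' M'' : P → ℕ} {s s' : List Tr}
    (h1 : N.FiresSeq M s M') (h2 : N.FiresSeq M' s' M'') :
    N.FiresSeq M (s ++ s') M'' := by
  induction s generalizing M with
  | nil =>
    have hMM : M' = M := h1
    subst hMM; simpa using h2
  | cons t ts ih =>
    obtain ⟨Mm, hf, hs⟩ := h1
    exact ⟨Mm, hf, ih hs⟩

theorem firesSeq_snoc {N : PTNet P Tr} {M M' M'' : P → ℕ} {s : List Tr} {t : Tr}
    (h1 : N.FiresSeq M s M') (h2 : N.Fires M' t M'') :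
    N.FiresSeq M (s ++ [t]) M'' :=
  firesSeq_append h1 ⟨M'', h2, rfl⟩

theorem mem_places_inl (p : P) :
    (Sum.inl p : P ⊕ P ⊕ Bool) ∈ (net N H h l).places ↔ p ∈ N.places := by
  simp [net]

theorem mem_places_inr (p : P) :
    (Sum.inr (Sum.inl p) : P ⊕ P ⊕ Bool) ∈ (net N H h l).places ↔ p ∈ N.places := by
  simp [net]

theorem mem_places_b (b : Bool) :
    (Sum.inr (Sum.inr b) : P ⊕ P ⊕ Bool) ∈ (net N H h l).places := by
  cases b <;> simp [net]

theorem mem_transitions_inl (u : Tr) :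
    (Sum.inl u : Tr ⊕ Fin 3) ∈ (net N H h l).transitions ↔ u ∈ N.transitions := by
  simp [net]

theorem mem_transitions_inr (i : Fin 3) :
    (Sum.inr i : Tr ⊕ Fin 3) ∈ (net N H h l).transitions := by
  have h3 : i = 0 ∨ i = 1 ∨ i = 2 := by omega
  rcases h3 with rfl | rfl | rfl <;> simp [net]

theorem enabled_iff (M' : P ⊕ P ⊕ Bool → ℕ) (t : Tr ⊕ Fin 3) :
    (net N H h l).Enabled M' t ↔ t ∈ (net N H h l).transitions ∧
      (∀ p ∈ N.places, (net N H h l).pre t (Sum.inl p) ≤ M' (Sum.inl p)) ∧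
      (∀ p ∈ N.places,
        (net N H h l).pre t (Sum.inr (Sum.inl p)) ≤ M' (Sum.inr (Sum.inl p))) ∧
      (net N H h l).pre t (Sum.inr (Sum.inr true)) ≤ M' (Sum.inr (Sum.inr true)) ∧
      (net N H h l).pre t (Sum.inr (Sum.inr false)) ≤ M' (Sum.inr (Sum.inr false)) := by
  constructor
  · rintro ⟨ht, hp⟩
    exact ⟨ht, fun p hp' => hp _ ((mem_places_inl N H h l p).2 hp'),
      fun p hp' => hp _ ((mem_places_inr N H h l p).2 hp'),
      hp _ (mem_places_b N H h l true), hp _ (mem_places_b N H h l false)⟩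
  · rintro ⟨ht, h1, h2, h3, h4⟩
    refine ⟨ht, ?_⟩
    rintro (p | p | b) hq
    · exact h1 p ((mem_places_inl N H h l p).1 hq)
    · exact h2 p ((mem_places_inr N H h l p).1 hq)
    · cases b
      · exact h4
      · exact h3

theorem enabled_inl_iff (M' : P ⊕ P ⊕ Bool → ℕ) (u : Tr) :
    (net N H h l).Enabled M' (Sum.inl u) ↔
      N.Enabled (pi1 M') u ∧ N.Enabled (pi2 M') u ∧
        (u ∈ H → 1 ≤ M' (Sum.inr (Sum.inr true))) := by
  rw [enabled_iff, mem_transitions_inl]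
  by_cases hu : u ∈ N.transitions
  · by_cases hH : u ∈ H <;>
      simp [net, hu, hH, PTNet.Enabled, pi1, pi2, and_assoc]
  · simp [PTNet.Enabled, hu]

theorem enabled_l1_iff (M' : P ⊕ P ⊕ Bool → ℕ) :
    (net N H h l).Enabled M' (Sum.inr 0) ↔
      (∀ p ∈ N.places, N.pre l p ≤ pi1 M' p) ∧
        1 ≤ M' (Sum.inr (Sum.inr false)) := by
  rw [enabled_iff]
  simp [net, mem_transitions_inr, pi1]

theorem enabled_l2_iff (M' : P ⊕ P ⊕ Bool → ℕ) :
    (net N H h l).Enabled M' (Sum.inr 1) ↔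
      (∀ p ∈ N.places, N.pre l p ≤ pi2 M' p) ∧
        1 ≤ M' (Sum.inr (Sum.inr false)) := by
  rw [enabled_iff]
  simp [net, mem_transitions_inr, pi2]

theorem enabled_h'_iff (M' : P ⊕ P ⊕ Bool → ℕ) :
    (net N H h l).Enabled M' (Sum.inr 2) ↔
      (∀ p ∈ N.places, N.pre h p ≤ pi2 M' p) ∧
        1 ≤ M' (Sum.inr (Sum.inr true)) := by
  rw [enabled_iff]
  simp [net, mem_transitions_inr, pi2,
    show (2 : Fin 3) ≠ 0 by decide, show (2 : Fin 3) ≠ 1 by decide]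


/-! Fire computations -/

theorem fire_inl_pi1 (M' : P ⊕ P ⊕ Bool → ℕ) {u : Tr} (hu : u ∈ N.transitions) :
    pi1 ((net N H h l).fire M' (Sum.inl u)) = N.fire (pi1 M') u := by
  funext p
  by_cases hp : p ∈ N.places <;> simp [pi1, PTNet.fire, net, hu, hp]

theorem fire_inl_pi2 (M' : P ⊕ P ⊕ Bool → ℕ) {u : Tr} (hu : u ∈ N.transitions) :
    pi2 ((net N H h l).fire M' (Sum.inl u)) = N.fire (pi2 M') u := by
  funext p
  by_cases hp : p ∈ N.places <;> simp [pi2, PTNet.fire, net, hu, hp]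

theorem fire_inl_x (M' : P ⊕ P ⊕ Bool → ℕ) (u : Tr) :
    (net N H h l).fire M' (Sum.inl u) (Sum.inr (Sum.inr true)) =
      M' (Sum.inr (Sum.inr true)) := by
  by_cases hu : u ∈ N.transitions
  · by_cases hH : u ∈ H <;> simp [PTNet.fire, net, hu, hH]
  · simp [PTNet.fire, net, hu]

theorem fire_inl_y (M' : P ⊕ P ⊕ Bool → ℕ) (u : Tr) :
    (net N H h l).fire M' (Sum.inl u) (Sum.inr (Sum.inr false)) =
      M' (Sum.inr (Sum.inr false)) := by
  by_cases hu : u ∈ N.transitions <;> simp [PTNet.fire, net, hu]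

theorem fire_l1_pi1 (M' : P ⊕ P ⊕ Bool → ℕ) :
    pi1 ((net N H h l).fire M' (Sum.inr 0)) = N.fire (pi1 M') l := by
  funext p
  by_cases hp : p ∈ N.places <;> simp [pi1, PTNet.fire, net, hp]

theorem fire_l1_pi2 (M' : P ⊕ P ⊕ Bool → ℕ) :
    pi2 ((net N H h l).fire M' (Sum.inr 0)) = pi2 M' := by
  funext p
  by_cases hp : p ∈ N.places <;> simp [pi2, PTNet.fire, net, hp]

theorem fire_l1_x (M' : P ⊕ P ⊕ Bool → ℕ) :
    (net N H h l).fire M' (Sum.inr 0) (Sum.inr (Sum.inr true)) =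
      M' (Sum.inr (Sum.inr true)) := by
  simp [PTNet.fire, net]

theorem fire_l1_y (M' : P ⊕ P ⊕ Bool → ℕ) :
    (net N H h l).fire M' (Sum.inr 0) (Sum.inr (Sum.inr false)) =
      M' (Sum.inr (Sum.inr false)) - 1 := by
  simp [PTNet.fire, net]

theorem fire_l2_pi1 (M' : P ⊕ P ⊕ Bool → ℕ) :
    pi1 ((net N H h l).fire M' (Sum.inr 1)) = pi1 M' := by
  funext p
  by_cases hp : p ∈ N.places <;> simp [pi1, PTNet.fire, net, hp]

theorem fire_l2_pi2 (M' : P ⊕ P ⊕ Bool → ℕ) :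
    pi2 ((net N H h l).fire M' (Sum.inr 1)) = N.fire (pi2 M') l := by
  funext p
  by_cases hp : p ∈ N.places <;> simp [pi2, PTNet.fire, net, hp]

theorem fire_l2_x (M' : P ⊕ P ⊕ Bool → ℕ) :
    (net N H h l).fire M' (Sum.inr 1) (Sum.inr (Sum.inr true)) =
      M' (Sum.inr (Sum.inr true)) := by
  simp [PTNet.fire, net]

theorem fire_l2_y (M' : P ⊕ P ⊕ Bool → ℕ) :
    (net N H h l).fire M' (Sum.inr 1) (Sum.inr (Sum.inr false)) =
      M' (Sum.inr (Sum.inr false)) - 1 := by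
  simp [PTNet.fire, net]

theorem fire_h'_pi1 (M' : P ⊕ P ⊕ Bool → ℕ) :
    pi1 ((net N H h l).fire M' (Sum.inr 2)) = pi1 M' := by
  funext p
  by_cases hp : p ∈ N.places <;>
    simp [pi1, PTNet.fire, net, hp,
      show (2 : Fin 3) ≠ 0 by decide, show (2 : Fin 3) ≠ 1 by decide]

theorem fire_h'_pi2 (M' : P ⊕ P ⊕ Bool → ℕ) :
    pi2 ((net N H h l).fire M' (Sum.inr 2)) = N.fire (pi2 M') h := by
  funext p
  by_cases hp : p ∈ N.places <;>
    simp [pi2, PTNet.fire, net, hp,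
      show (2 : Fin 3) ≠ 0 by decide, show (2 : Fin 3) ≠ 1 by decide]

theorem fire_h'_x (M' : P ⊕ P ⊕ Bool → ℕ) :
    (net N H h l).fire M' (Sum.inr 2) (Sum.inr (Sum.inr true)) =
      M' (Sum.inr (Sum.inr true)) - 1 := by
  simp [PTNet.fire, net,
    show (2 : Fin 3) ≠ 0 by decide, show (2 : Fin 3) ≠ 1 by decide]

theorem fire_h'_y (M' : P ⊕ P ⊕ Bool → ℕ) :
    (net N H h l).fire M' (Sum.inr 2) (Sum.inr (Sum.inr false)) =
      M' (Sum.inr (Sum.inr false)) + 1 := by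
  simp [PTNet.fire, net,
    show (2 : Fin 3) ≠ 0 by decide, show (2 : Fin 3) ≠ 1 by decide]


/-- The invariant on reachable markings of the gadget. -/
def Inv (N : PTNet P Tr) (M0 : P → ℕ) (L H : Finset Tr) (h : Tr)
    (M' : P ⊕ P ⊕ Bool → ℕ) : Prop :=
  (M' (Sum.inr (Sum.inr true)) = 1 ∧ M' (Sum.inr (Sum.inr false)) = 0 ∧
    pi2 M' = pi1 M' ∧
    ∃ w, (∀ t ∈ w, t ∈ N.transitions) ∧ N.FiresSeq M0 w (pi1 M')) ∨
  (M' (Sum.inr (Sum.inr true)) = 0 ∧ M' (Sum.inr (Sum.inr false)) = 1 ∧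
    ∃ w s M1 M2, (∀ t ∈ w, t ∈ N.transitions) ∧ (∀ t ∈ s, t ∈ L) ∧
      N.FiresSeq M0 w M1 ∧ N.Fires M1 h M2 ∧
      N.FiresSeq M1 s (pi1 M') ∧ N.FiresSeq M2 s (pi2 M')) ∨
  (M' (Sum.inr (Sum.inr true)) = 0 ∧ M' (Sum.inr (Sum.inr false)) = 0)

theorem inv_step {N : PTNet P Tr} {M0 : P → ℕ} {L H : Finset Tr} {h l : Tr}
    (hT : N.transitions = L ∪ H) (hh : h ∈ H)
    {M' M'' : P ⊕ P ⊕ Bool → ℕ} {t : Tr ⊕ Fin 3}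
    (hinv : Inv N M0 L H h M') (hf : (net N H h l).Fires M' t M'') :
    Inv N M0 L H h M'' := by
  obtain ⟨hen, rfl⟩ := hf
  rcases t with u | i
  · -- synchronized transition
    have hu : u ∈ N.transitions := (mem_transitions_inl N H h l u).1 hen.1
    rw [enabled_inl_iff] at hen
    obtain ⟨he1, he2, hexH⟩ := hen
    rcases hinv with ⟨hx, hy, heq, w, hw, hseq⟩ | ⟨hx, hy, w, s, M1, M2, hw, hs, hseq, hfh, hs1, hs2⟩ | ⟨hx, hy⟩
    · refine Or.inl ⟨?_, ?_, ?_, w ++ [u], ?_, ?_⟩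
      · rw [fire_inl_x]; exact hx
      · rw [fire_inl_y]; exact hy
      · rw [fire_inl_pi1 N H h l M' hu, fire_inl_pi2 N H h l M' hu, heq]
      · intro t ht
        rcases List.mem_append.1 ht with ht | ht
        · exact hw t ht
        · simpa using (List.mem_singleton.1 ht) ▸ hu
      · rw [fire_inl_pi1 N H h l M' hu]
        exact firesSeq_snoc hseq ⟨he1, rfl⟩
    · have hH : u ∉ H := fun hc => by
        have := hexH hc; omega
      have huL : u ∈ L := by
        have : u ∈ L ∪ H := hT ▸ hu
        rcases Finset.mem_union.1 this with h' | h'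
        · exact h'
        · exact absurd h' hH
      refine Or.inr (Or.inl ⟨?_, ?_, w, s ++ [u], M1, M2, hw, ?_, hseq, hfh, ?_, ?_⟩)
      · rw [fire_inl_x]; exact hx
      · rw [fire_inl_y]; exact hy
      · intro t ht
        rcases List.mem_append.1 ht with ht | ht
        · exact hs t ht
        · exact (List.mem_singleton.1 ht) ▸ huL
      · rw [fire_inl_pi1 N H h l M' hu]
        exact firesSeq_snoc hs1 ⟨he1, rfl⟩
      · rw [fire_inl_pi2 N H h l M' hu]
        exact firesSeq_snoc hs2 ⟨he2, rfl⟩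
    · exact Or.inr (Or.inr ⟨by rw [fire_inl_x]; exact hx, by rw [fire_inl_y]; exact hy⟩)
  · have h3 : i = 0 ∨ i = 1 ∨ i = 2 := by omega
    rcases h3 with rfl | rfl | rfl
    · -- l1'
      rw [enabled_l1_iff] at hen
      obtain ⟨-, hy1⟩ := hen
      rcases hinv with ⟨hx, hy, -⟩ | ⟨hx, hy, -⟩ | ⟨hx, hy⟩
      · omega
      · exact Or.inr (Or.inr ⟨by rw [fire_l1_x]; exact hx,
          by rw [fire_l1_y]; omega⟩)
      · omega
    · -- l2'
      rw [enabled_l2_iff] at hen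
      obtain ⟨-, hy1⟩ := hen
      rcases hinv with ⟨hx, hy, -⟩ | ⟨hx, hy, -⟩ | ⟨hx, hy⟩
      · omega
      · exact Or.inr (Or.inr ⟨by rw [fire_l2_x]; exact hx,
          by rw [fire_l2_y]; omega⟩)
      · omega
    · -- h'
      rw [enabled_h'_iff] at hen
      obtain ⟨hpre2, hx1⟩ := hen
      rcases hinv with ⟨hx, hy, heq, w, hw, hseq⟩ | ⟨hx, hy, -⟩ | ⟨hx, hy⟩
      · have hhT : h ∈ N.transitions := by
          rw [hT]; exact Finset.mem_union_right _ hh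
        refine Or.inr (Or.inl ⟨by rw [fire_h'_x]; omega, by rw [fire_h'_y]; omega,
          w, [], pi1 M', N.fire (pi1 M') h, hw, by simp, hseq, ?_, ?_, ?_⟩)
        · exact ⟨⟨hhT, by rw [← heq]; exact hpre2⟩, rfl⟩
        · show pi1 ((net N H h l).fire M' (Sum.inr 2)) = pi1 M'
          exact fire_h'_pi1 N H h l M'
        · show pi2 ((net N H h l).fire M' (Sum.inr 2)) = N.fire (pi1 M') h
          rw [fire_h'_pi2 N H h l M', heq]
      · omega
      · omega


theorem inv_reach {N : PTNet P Tr} {M0 : P → ℕ} {L H : Finset Tr} {h l : Tr}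
    (hT : N.transitions = L ∪ H) (hh : h ∈ H)
    {K M' : P ⊕ P ⊕ Bool → ℕ} {s : List (Tr ⊕ Fin 3)}
    (hK : Inv N M0 L H h K) (hs : (net N H h l).FiresSeq K s M') :
    Inv N M0 L H h M' := by
  induction s generalizing K with
  | nil =>
    have : M' = K := hs
    exact this ▸ hK
  | cons t ts ih =>
    obtain ⟨Mm, hf, hs'⟩ := hs
    exact ih (inv_step hT hh hK hf) hs'

theorem inv_init (N : PTNet P Tr) (M0 : P → ℕ) (L H : Finset Tr) (h : Tr) :
    Inv N M0 L H h (Gadget13.init M0) :=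
  Or.inl ⟨rfl, rfl, rfl, [], by simp, rfl⟩

/-- Markings of the gadget given by a pair of `N`-markings and the contents
of `x` and `y`. -/
def emb (Ma Mb : P → ℕ) (a b : ℕ) : P ⊕ P ⊕ Bool → ℕ :=
  Sum.elim Ma (Sum.elim Mb fun c => if c then a else b)

theorem fire_emb_inl {Ma Mb : P → ℕ} {a b : ℕ} {u : Tr} (hu : u ∈ N.transitions) :
    (net N H h l).fire (emb Ma Mb a b) (Sum.inl u) =
      emb (N.fire Ma u) (N.fire Mb u) a b := by
  funext q
  rcases q with p | p | c
  · exact congrFun (fire_inl_pi1 N H h l (emb Ma Mb a b) hu) p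
  · exact congrFun (fire_inl_pi2 N H h l (emb Ma Mb a b) hu) p
  · cases c
    · exact fire_inl_y N H h l (emb Ma Mb a b) u
    · exact fire_inl_x N H h l (emb Ma Mb a b) u

theorem fire_emb_h' {Ma Mb : P → ℕ} :
    (net N H h l).fire (emb Ma Mb 1 0) (Sum.inr 2) =
      emb Ma (N.fire Mb h) 0 1 := by
  funext q
  rcases q with p | p | c
  · exact congrFun (fire_h'_pi1 N H h l (emb Ma Mb 1 0)) p
  · exact congrFun (fire_h'_pi2 N H h l (emb Ma Mb 1 0)) p
  · cases c
    · exact fire_h'_y N H h l (emb Ma Mb 1 0)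
    · exact fire_h'_x N H h l (emb Ma Mb 1 0)

theorem sync {w : List Tr} {a b : ℕ}
    (hw : ∀ t ∈ w, t ∈ N.transitions ∧ (t ∈ H → 1 ≤ a))
    {Ma Mb Ma' Mb' : P → ℕ}
    (ha : N.FiresSeq Ma w Ma') (hb : N.FiresSeq Mb w Mb') :
    (net N H h l).FiresSeq (emb Ma Mb a b) (w.map Sum.inl)
      (emb Ma' Mb' a b) := by
  induction w generalizing Ma Mb with
  | nil =>
    have ha' : Ma' = Ma := ha
    have hb' : Mb' = Mb := hb
    show emb Ma' Mb' a b = emb Ma Mb a b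
    rw [ha', hb']
  | cons u ws ih =>
    obtain ⟨Mam, ⟨hena, rfl⟩, ha'⟩ := ha
    obtain ⟨Mbm, ⟨henb, rfl⟩, hb'⟩ := hb
    refine ⟨emb (N.fire Ma u) (N.fire Mb u) a b, ⟨?_, ?_⟩,
      ih (fun t ht => hw t (List.mem_cons_of_mem u ht)) ha' hb'⟩
    · rw [enabled_inl_iff]
      exact ⟨hena, henb, fun hH => (hw u List.mem_cons_self).2 hH⟩
    · exact (fire_emb_inl N H h l (hw u List.mem_cons_self).1).symm

end Gadget13Aux




/-- `P(h,l)` holds in `N` iff no marking `M'` reachable in the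
constructed net `N'` enables exactly one of `l1'` and `l2'`. -/
theorem propP_iff_gadget
    {P Tr : Type _} [DecidableEq P] [DecidableEq Tr]
    (N : PTNet P Tr) (M0 : P → ℕ) (L H : Finset Tr)
    (hT : N.transitions = L ∪ H) (hLH : Disjoint L H)
    (h l : Tr) (hh : h ∈ H) (hl : l ∈ L) :
    PropP N M0 L H h l ↔
      ∀ M' : P ⊕ P ⊕ Bool → ℕ,
        (Gadget13.net N H h l).Reachable (Gadget13.init M0) M' →
        ¬ (((Gadget13.net N H h l).Enabled M' (Sum.inr 0) ∧
              ¬ (Gadget13.net N H h l).Enabled M' (Sum.inr 1)) ∨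
           (¬ (Gadget13.net N H h l).Enabled M' (Sum.inr 0) ∧
              (Gadget13.net N H h l).Enabled M' (Sum.inr 1))) := by
  have hlT : l ∈ N.transitions := by rw [hT]; exact Finset.mem_union_left _ hl
  have hhT : h ∈ N.transitions := by rw [hT]; exact Finset.mem_union_right _ hh
  constructor
  · -- P(h,l) implies no reachable violating marking
    intro hP M' hreach hviol
    obtain ⟨σ, hσ⟩ := hreach
    have hinv := Gadget13Aux.inv_reach hT hh (Gadget13Aux.inv_init N M0 L H h) hσ
    have hy1 : 1 ≤ M' (Sum.inr (Sum.inr false)) := by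
      rcases hviol with ⟨h1, -⟩ | ⟨-, h2⟩
      · exact ((Gadget13Aux.enabled_l1_iff N H h l M').1 h1).2
      · exact ((Gadget13Aux.enabled_l2_iff N H h l M').1 h2).2
    rcases hinv with ⟨-, hy, -⟩ |
      ⟨hx, hy, w, s', M1, M2, hw, hsL, hseq, hfh, hs1, hs2⟩ | ⟨-, hy⟩
    · omega
    · have hiff := hP w s' M1 M2 (Gadget13Aux.pi1 M') (Gadget13Aux.pi2 M')
        (fun t ht => by rw [← hT]; exact hw t ht) hsL hseq hfh hs1 hs2
      have e1 : (Gadget13.net N H h l).Enabled M' (Sum.inr 0) ↔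
          N.Enabled (Gadget13Aux.pi1 M') l := by
        rw [Gadget13Aux.enabled_l1_iff]
        constructor
        · rintro ⟨h1, -⟩; exact ⟨hlT, h1⟩
        · rintro ⟨-, h1⟩; exact ⟨h1, hy1⟩
      have e2 : (Gadget13.net N H h l).Enabled M' (Sum.inr 1) ↔
          N.Enabled (Gadget13Aux.pi2 M') l := by
        rw [Gadget13Aux.enabled_l2_iff]
        constructor
        · rintro ⟨h1, -⟩; exact ⟨hlT, h1⟩
        · rintro ⟨-, h1⟩; exact ⟨h1, hy1⟩
      rw [e1, e2] at hviol
      tauto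
    · omega
  · -- no reachable violating marking implies P(h,l)
    intro hG w s M1 M2 M3 M4 hwLH hsL hseq hfh hs3 hs4
    have hwT : ∀ t ∈ w, t ∈ N.transitions := fun t ht => by
      rw [hT]; exact hwLH t ht
    have hsT : ∀ t ∈ s, t ∈ N.transitions := fun t ht => by
      rw [hT]; exact Finset.mem_union_left _ (hsL t ht)
    -- phase 1 : fire `w` synchronously
    have step1 := Gadget13Aux.sync N H h l (a := 1) (b := 0)
      (fun t ht => ⟨hwT t ht, fun _ => le_refl 1⟩) hseq hseq
    -- phase 2 : fire `h'`
    obtain ⟨henh, hM2⟩ := hfh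
    have stepH : (Gadget13.net N H h l).Fires (Gadget13Aux.emb M1 M1 1 0)
        (Sum.inr 2) (Gadget13Aux.emb M1 M2 0 1) := by
      refine ⟨?_, ?_⟩
      · rw [Gadget13Aux.enabled_h'_iff]
        exact ⟨henh.2, le_refl 1⟩
      · rw [Gadget13Aux.fire_emb_h', hM2]
    -- phase 3 : fire `s` synchronously
    have step2 := Gadget13Aux.sync N H h l (a := 0) (b := 1)
      (fun t ht => ⟨hsT t ht,
        fun hH => absurd (hsL t ht) (Finset.disjoint_right.1 hLH hH)⟩) hs3 hs4
    have hreach : (Gadget13.net N H h l).Reachable (Gadget13.init M0)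
        (Gadget13Aux.emb M3 M4 0 1) := by
      refine ⟨w.map Sum.inl ++ (Sum.inr 2 :: s.map Sum.inl), ?_⟩
      have hinit : Gadget13.init M0 = Gadget13Aux.emb M0 M0 1 0 := rfl
      rw [hinit]
      exact Gadget13Aux.firesSeq_append step1
        ⟨Gadget13Aux.emb M1 M2 0 1, stepH, step2⟩
    have hnv := hG _ hreach
    have e1 : (Gadget13.net N H h l).Enabled (Gadget13Aux.emb M3 M4 0 1)
        (Sum.inr 0) ↔ N.Enabled M3 l := by
      rw [Gadget13Aux.enabled_l1_iff]
      constructor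
      · rintro ⟨h1, -⟩; exact ⟨hlT, h1⟩
      · rintro ⟨-, h1⟩; exact ⟨h1, le_refl 1⟩
    have e2 : (Gadget13.net N H h l).Enabled (Gadget13Aux.emb M3 M4 0 1)
        (Sum.inr 1) ↔ N.Enabled M4 l := by
      rw [Gadget13Aux.enabled_l2_iff]
      constructor
      · rintro ⟨h1, -⟩; exact ⟨hlT, h1⟩
      · rintro ⟨-, h1⟩; exact ⟨h1, le_refl 1⟩
    rw [e1, e2] at hnv
    tauto
end

section
/- A three-level PT-net system (N,M0) with transition set T = L ∪ D ∪ H has the property INI if and only if (N\D, M) and (N\(H ∪ D), M) are language equivalent (with observable transitions L) for M = M0 and for every marking M such that M0[υd⟩M in N for some sequence υ ∈ T* and some downgrading transition d ∈ D. -/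
section Aux

variable {P Tr : Type _} [DecidableEq P] [DecidableEq Tr]

lemma PTNet.ext' {N1 N2 : PTNet P Tr} (h1 : N1.places = N2.places)
    (h2 : N1.transitions = N2.transitions) (h3 : N1.pre = N2.pre)
    (h4 : N1.post = N2.post) : N1 = N2 := by
  cases N1; cases N2
  cases h1; cases h2; cases h3; cases h4
  rfl

lemma PTNet.restrict_restrict (N : PTNet P Tr) (A B : Finset Tr) :
    (N.restrict A).restrict B = N.restrict (B ∪ A) := by
  have ht : (N.transitions \ A) \ B = N.transitions \ (B ∪ A) := by
    ext t; simp only [Finset.mem_sdiff, Finset.mem_union]; tauto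
  refine PTNet.ext' rfl ht ?_ ?_ <;> funext t p <;>
    simp only [PTNet.restrict, ht] <;>
    by_cases h : t ∈ N.transitions \ (B ∪ A)
  · have h' : t ∈ N.transitions \ A := by
      simp only [Finset.mem_sdiff, Finset.mem_union] at h ⊢; tauto
    simp [h, h']
  · simp [h]
  · have h' : t ∈ N.transitions \ A := by
      simp only [Finset.mem_sdiff, Finset.mem_union] at h ⊢; tauto
    simp [h, h']
  · simp [h]

/-- Lift a firing sequence of `B \ H` to the restricted composition, keeping
agreement on the places of `B`. -/
lemma lift_low {B N' : PTNet P Tr} {L H : Finset Tr}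
    (hBsub : B.transitions ⊆ L ∪ H) (hTrL : Disjoint N'.transitions L) :
    ∀ (s : List Tr) (Mb Mb' Mc : P → ℕ),
      (B.restrict H).FiresSeq Mb s Mb' → (∀ p ∈ B.places, Mc p = Mb p) →
      ∃ Mc', ((B.comp N').restrict (H \ N'.transitions)).FiresSeq Mc s Mc' := by
  intro s
  induction s with
  | nil => intro Mb Mb' Mc _ _; exact ⟨Mc, rfl⟩
  | cons t s ih =>
    intro Mb Mb' Mc hseq hagree
    obtain ⟨M1, ⟨⟨htmem, hen⟩, hfire⟩, hseq'⟩ := hseq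
    simp only [PTNet.restrict, Finset.mem_sdiff] at htmem
    have htL : t ∈ L := by
      rcases Finset.mem_union.mp (hBsub htmem.1) with h | h
      · exact h
      · exact absurd h htmem.2
    have htN' : t ∉ N'.transitions := fun h => Finset.disjoint_left.mp hTrL h htL
    set C := (B.comp N').restrict (H \ N'.transitions) with hC
    have htC : t ∈ C.transitions := by
      simp only [hC, PTNet.restrict, PTNet.comp, Finset.mem_sdiff, Finset.mem_union]
      exact ⟨Or.inl htmem.1, fun h => htmem.2 h.1⟩
    have hpre : ∀ p, C.pre t p = if p ∈ B.places then B.pre t p else N'.pre t p := by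
      intro p; simp only [hC, PTNet.restrict, PTNet.comp]
      have hX := htC
      simp only [hC, PTNet.restrict, PTNet.comp] at hX
      exact if_pos hX
    have hpost : ∀ p, C.post t p = if p ∈ B.places then B.post t p else N'.post t p := by
      intro p; simp only [hC, PTNet.restrict, PTNet.comp]
      have hX := htC
      simp only [hC, PTNet.restrict, PTNet.comp] at hX
      exact if_pos hX
    have hen' : C.Enabled Mc t := by
      refine ⟨htC, ?_⟩
      intro p hp
      rw [hpre]
      by_cases hpB : p ∈ B.places
      · rw [if_pos hpB, hagree p hpB]
        have := hen p hpB
        simpa only [PTNet.restrict, if_pos (Finset.mem_sdiff.mpr htmem)] using this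
      · rw [if_neg hpB, N'.pre_eq_zero t htN']
        exact Nat.zero_le _
    have hagree' : ∀ p ∈ B.places, C.fire Mc t p = M1 p := by
      intro p hpB
      have hpC : p ∈ C.places := by
        simp only [hC, PTNet.restrict, PTNet.comp, Finset.mem_union]
        exact Or.inl hpB
      rw [hfire]
      simp only [PTNet.fire, if_pos hpC, hpre, hpost, if_pos hpB]
      have hpB' : p ∈ (B.restrict H).places := hpB
      rw [if_pos hpB']
      simp only [PTNet.restrict, if_pos (Finset.mem_sdiff.mpr htmem), hagree p hpB]
    obtain ⟨Mc', hs⟩ := ih M1 Mb' (C.fire Mc t) hseq' hagree'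
    exact ⟨Mc', C.fire Mc t, ⟨hen', rfl⟩, hs⟩

/-- Project a firing sequence of the restricted composition to `B`, keeping the
same observable word. -/
lemma project {B N' : PTNet P Tr} {L H : Finset Tr} (hTrL : Disjoint N'.transitions L) :
    ∀ (s : List Tr) (Mc Mc' Mb : P → ℕ),
      ((B.comp N').restrict (H \ N'.transitions)).FiresSeq Mc s Mc' →
      (∀ p ∈ B.places, Mb p = Mc p) →
      ∃ s' Mb', B.FiresSeq Mb s' Mb' ∧ s'.filter (· ∈ L) = s.filter (· ∈ L) := by
  intro s
  induction s with
  | nil => intro Mc Mc' Mb _ _; exact ⟨[], Mb, rfl, rfl⟩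
  | cons t s ih =>
    intro Mc Mc' Mb hseq hagree
    obtain ⟨M1, ⟨⟨htmem, hen⟩, hfire⟩, hseq'⟩ := hseq
    set C := (B.comp N').restrict (H \ N'.transitions) with hC
    have hpre : ∀ p, C.pre t p = if p ∈ B.places then B.pre t p else N'.pre t p := by
      intro p; simp only [hC, PTNet.restrict, PTNet.comp]
      have hX := htmem
      simp only [hC, PTNet.restrict, PTNet.comp] at hX
      exact if_pos hX
    have hpost : ∀ p, C.post t p = if p ∈ B.places then B.post t p else N'.post t p := by
      intro p; simp only [hC, PTNet.restrict, PTNet.comp]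
      have hX := htmem
      simp only [hC, PTNet.restrict, PTNet.comp] at hX
      exact if_pos hX
    have hfirep : ∀ p ∈ B.places, M1 p = Mc p + B.post t p - B.pre t p := by
      intro p hpB
      have hpC : p ∈ C.places := by
        simp only [hC, PTNet.restrict, PTNet.comp, Finset.mem_union]; exact Or.inl hpB
      rw [hfire]
      simp only [PTNet.fire, if_pos hpC, hpre, hpost, if_pos hpB]
    by_cases htB : t ∈ B.transitions
    · -- fire t in B as well
      have henB : B.Enabled Mb t := by
        refine ⟨htB, fun p hpB => ?_⟩
        have hpC : p ∈ C.places := by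
          simp only [hC, PTNet.restrict, PTNet.comp, Finset.mem_union]; exact Or.inl hpB
        have := hen p hpC
        rw [hpre, if_pos hpB] at this
        rw [hagree p hpB]; exact this
      have hagree' : ∀ p ∈ B.places, B.fire Mb t p = M1 p := by
        intro p hpB
        simp only [PTNet.fire, if_pos hpB, hagree p hpB, hfirep p hpB]
      obtain ⟨s', Mb', hs, hfilt⟩ := ih M1 Mc' (B.fire Mb t) hseq' hagree'
      refine ⟨t :: s', Mb', ⟨B.fire Mb t, ⟨henB, rfl⟩, hs⟩, ?_⟩
      simp only [List.filter_cons, hfilt]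
    · -- t has no effect on B's places; also t ∉ L
      have htN' : t ∈ N'.transitions := by
        have := htmem
        simp only [hC, PTNet.restrict, PTNet.comp, Finset.mem_sdiff, Finset.mem_union] at this
        rcases this.1 with h | h
        · exact absurd h htB
        · exact h
      have htL : t ∉ L := Finset.disjoint_left.mp hTrL htN'
      have hagree' : ∀ p ∈ B.places, Mb p = M1 p := by
        intro p hpB
        rw [hfirep p hpB, B.pre_eq_zero t htB, B.post_eq_zero t htB]
        simpa using hagree p hpB
      obtain ⟨s', Mb', hs, hfilt⟩ := ih M1 Mc' Mb hseq' hagree'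
      refine ⟨s', Mb', hs, ?_⟩
      rw [hfilt, List.filter_cons, if_neg (by simpa using htL)]

/-- Firing sequences of `B` lift verbatim to the composition with the
place-free high environment. -/
lemma lift_canonical {B : PTNet P Tr} {H : Finset Tr} :
    ∀ (s : List Tr) (M M' : P → ℕ), B.FiresSeq M s M' →
      ((B.comp (PTNet.ofSets ∅ H)).restrict (H \ H)).FiresSeq M s M' := by
  intro s
  induction s with
  | nil => intro M M' h; exact h
  | cons t s ih =>
    intro M M' hseq
    obtain ⟨M1, ⟨⟨htB, hen⟩, hfire⟩, hseq'⟩ := hseq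
    set C := (B.comp (PTNet.ofSets (∅ : Finset P) H)).restrict (H \ H) with hC
    have htC : t ∈ C.transitions := by
      simp only [hC, PTNet.restrict, PTNet.comp, PTNet.ofSets, Finset.sdiff_self,
        Finset.mem_sdiff, Finset.mem_union, Finset.notMem_empty, not_false_iff]
      exact ⟨Or.inl htB, trivial⟩
    have hplaces : ∀ p, p ∈ C.places ↔ p ∈ B.places := by
      intro p
      simp [hC, PTNet.restrict, PTNet.comp, PTNet.ofSets]
    have hpre : ∀ p, C.pre t p = if p ∈ B.places then B.pre t p else 0 := by
      intro p
      simp only [hC, PTNet.restrict, PTNet.comp, PTNet.ofSets]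
      have hX := htC
      simp only [hC, PTNet.restrict, PTNet.comp, PTNet.ofSets] at hX
      exact if_pos hX
    have hpost : ∀ p, C.post t p = if p ∈ B.places then B.post t p else 0 := by
      intro p
      simp only [hC, PTNet.restrict, PTNet.comp, PTNet.ofSets]
      have hX := htC
      simp only [hC, PTNet.restrict, PTNet.comp, PTNet.ofSets] at hX
      exact if_pos hX
    have henC : C.Enabled M t := by
      refine ⟨htC, fun p hp => ?_⟩
      have hpB : p ∈ B.places := (hplaces p).mp hp
      rw [hpre, if_pos hpB]
      exact hen p hpB
    have hfireC : C.fire M t = B.fire M t := by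
      funext p
      by_cases hpB : p ∈ B.places
      · simp only [PTNet.fire, if_pos hpB, if_pos ((hplaces p).mpr hpB), hpre, hpost]
      · simp only [PTNet.fire, if_neg hpB, if_neg (fun h => hpB ((hplaces p).mp h))]
    refine ⟨M1, ⟨henC, ?_⟩, ih M1 M' hseq'⟩
    rw [hfireC]; exact hfire

lemma ndc_iff_lang {B : PTNet P Tr} {M : P → ℕ} {L H : Finset Tr}
    (hBsub : B.transitions ⊆ L ∪ H) (hLH : Disjoint L H) :
    NDC B M L H ↔ B.lang M L = (B.restrict H).lang M L := by
  constructor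
  · intro hndc
    have hd1 : Disjoint B.places (PTNet.ofSets (∅ : Finset P) H : PTNet P Tr).places := by
      simp [PTNet.ofSets]
    have hd2 : Disjoint (PTNet.ofSets (∅ : Finset P) H : PTNet P Tr).transitions L := by
      simpa [PTNet.ofSets] using hLH.symm
    have h := hndc (PTNet.ofSets ∅ H) M hd1 hd2
    have hcomb : B.combine M M = M := by
      funext p; simp [PTNet.combine]
    rw [hcomb] at h
    have hofs : (PTNet.ofSets (∅ : Finset P) H : PTNet P Tr).transitions = H := rfl
    rw [hofs] at h
    -- `h : (B.restrict H).lang M L = C0.lang M L`; show C0.lang M L = B.lang M L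
    have hC0 : ((B.comp (PTNet.ofSets (∅ : Finset P) H)).restrict (H \ H)).lang M L
        = B.lang M L := by
      ext w
      constructor
      · rintro ⟨s, Mc, hs, rfl⟩
        have hTrL : Disjoint (PTNet.ofSets (∅ : Finset P) H : PTNet P Tr).transitions L := hd2
        obtain ⟨s', Mb', hs', hfilt⟩ := project (B := B) hTrL s M Mc M hs (fun _ _ => rfl)
        exact ⟨s', Mb', hs', hfilt⟩
      · rintro ⟨s, Mb, hs, rfl⟩
        exact ⟨s, Mb, lift_canonical s M Mb hs, rfl⟩
    rw [h, hC0]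
  · intro hlang N' M0' hd1 hd2
    ext w
    constructor
    · rintro ⟨s, Mb', hs, rfl⟩
      have hagree : ∀ p ∈ B.places, (B.combine M M0') p = M p := by
        intro p hp; simp [PTNet.combine, hp]
      obtain ⟨Mc', hs'⟩ := lift_low hBsub hd2 s M Mb' (B.combine M M0') hs hagree
      exact ⟨s, Mc', hs', rfl⟩
    · rintro ⟨s, Mc', hs, rfl⟩
      have hagree : ∀ p ∈ B.places, M p = (B.combine M M0') p := by
        intro p hp; simp [PTNet.combine, hp]
      obtain ⟨s', Mb', hs', hfilt⟩ := project (B := B) hd2 s (B.combine M M0') Mc' M hs hagree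
      have : s'.filter (· ∈ L) ∈ B.lang M L := ⟨s', Mb', hs', rfl⟩
      rw [hlang] at this
      rwa [hfilt] at this

end Aux

/-- a three-level net system has INI iff `(N\D, M)` and
`(N\(H∪D), M)` are language equivalent (observable transitions `L`) for
`M = M0` and for every `M` with `M0[υd⟩M` in `N`, `d ∈ D`. -/
theorem ini_iff_lang_eq
    {P Tr : Type _} [DecidableEq P] [DecidableEq Tr]
    (N : PTNet P Tr) (M0 : P → ℕ) (L D H : Finset Tr)
    (hT : N.transitions = L ∪ D ∪ H)
    (hLD : Disjoint L D) (hLH : Disjoint L H) (hDH : Disjoint D H) :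
    INI N M0 L D H ↔
      ((N.restrict D).lang M0 L = (N.restrict (H ∪ D)).lang M0 L ∧
       ∀ (υ : List Tr) (d : Tr) (M : P → ℕ), d ∈ D →
         N.FiresSeq M0 (υ ++ [d]) M →
         (N.restrict D).lang M L = (N.restrict (H ∪ D)).lang M L) := by
  have hsub : (N.restrict D).transitions ⊆ L ∪ H := by
    intro t ht
    simp only [PTNet.restrict, Finset.mem_sdiff, hT, Finset.mem_union] at ht
    simp only [Finset.mem_union]
    tauto
  have hres : (N.restrict D).restrict H = N.restrict (H ∪ D) :=
    PTNet.restrict_restrict N D H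
  constructor
  · rintro ⟨h0, h1⟩
    refine ⟨?_, fun υ d M hd hseq => ?_⟩
    · have := (ndc_iff_lang hsub hLH).mp h0
      rwa [hres] at this
    · have := (ndc_iff_lang hsub hLH).mp (h1 υ d M hd hseq)
      rwa [hres] at this
  · rintro ⟨h0, h1⟩
    refine ⟨(ndc_iff_lang hsub hLH).mpr ?_, fun υ d M hd hseq => (ndc_iff_lang hsub hLH).mpr ?_⟩
    · rw [hres]; exact h0
    · rw [hres]; exact h1 υ d M hd hseq
end

section
/- Let (N,M0) be a three-level PT-net system with T = L ∪ D ∪ H and fix a downgrading transition d ∈ D. Construct the net system N_d as follows: N_d has all places of N plus two fresh places p_d and p_d'; its initial marking extends M0 by one token on p_d and none on p_d'; every transition t of N keeps its flow and additionally has F(p_d,t) = F(t,p_d) = 1; there is a new transition d' with the same flow as d except F(d',p_d) = 0 and F(d',p_d') = 1; and for each transition t ∈ L ∪ H there is a fresh copy t' with the same flow as t except that its side-condition loop is on p_d' instead of p_d (F(p_d',t') = F(t',p_d') = 1 and F(p_d,t') = F(t',p_d) = 0). In N_d, all transitions are observable (low-level) except those in H' = { t' | t ∈ H }, which are unobservable.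 Then (N\D, M) and (N\(H ∪ D), M) are language equivalent (with observable transitions L) for every marking M such that M0[υd⟩M in N for some υ ∈ T*, if and only if N_d and N_d\H' are language equivalent. -/
/-! The construction of the net `N_d`: places of `N` plus `p_d = Sum.inr true`
and `p_d' = Sum.inr false`; transitions `Sum.inl t` for `t ∈ T` (with an extra
side-condition loop on `p_d`), the fresh copy `t' = Sum.inr (Sum.inl t)` for
`t ∈ L ∪ H` (with the side-condition loop on `p_d'` instead of `p_d`), and
`d' = Sum.inr (Sum.inr ())` (with the same flow as `d` except that it produces
on `p_d'` instead of returning the token to `p_d`). -/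

namespace Gadget16

variable {P Tr : Type _} [DecidableEq P] [DecidableEq Tr]

def net (N : PTNet P Tr) (L H : Finset Tr) (d : Tr) :
    PTNet (P ⊕ Bool) (Tr ⊕ Tr ⊕ Unit) where
  places := N.places.image Sum.inl ∪ {Sum.inr true, Sum.inr false}
  transitions :=
    N.transitions.image Sum.inl ∪
      (L ∪ H).image (fun t => Sum.inr (Sum.inl t)) ∪ {Sum.inr (Sum.inr ())}
  pre :=
    Sum.elim
      (fun t =>
        if t ∈ N.transitions then
          Sum.elim (fun p => N.pre t p) (fun b => if b then 1 else 0)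
        else fun _ => 0)
      (Sum.elim
        (fun u =>
          if u ∈ L ∪ H then
            Sum.elim (fun p => N.pre u p) (fun b => if b then 0 else 1)
          else fun _ => 0)
        (fun _ => Sum.elim (fun p => N.pre d p) (fun b => if b then 1 else 0)))
  post :=
    Sum.elim
      (fun t =>
        if t ∈ N.transitions then
          Sum.elim (fun p => N.post t p) (fun b => if b then 1 else 0)
        else fun _ => 0)
      (Sum.elim
        (fun u =>
          if u ∈ L ∪ H then
            Sum.elim (fun p => N.post u p) (fun b => if b then 0 else 1)
          else fun _ => 0)
        (fun _ => Sum.elim (fun p => N.post d p) (fun b => if b then 0 else 1)))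
  pre_eq_zero := by
    intro t ht q
    rcases t with u | u | u
    · have hu : u ∉ N.transitions := fun hc =>
        ht (Finset.mem_union_left _
          (Finset.mem_union_left _ (Finset.mem_image_of_mem _ hc)))
      simp [hu]
    · have hu : u ∉ L ∪ H := fun hc =>
        ht (Finset.mem_union_left _
          (Finset.mem_union_right _ (Finset.mem_image_of_mem _ hc)))
      simp only [Sum.elim_inr, Sum.elim_inl]; rw [if_neg hu]
    · exact absurd (Finset.mem_union_right _ (by simp)) ht
  post_eq_zero := by
    intro t ht q
    rcases t with u | u | u
    · have hu : u ∉ N.transitions := fun hc =>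
        ht (Finset.mem_union_left _
          (Finset.mem_union_left _ (Finset.mem_image_of_mem _ hc)))
      simp [hu]
    · have hu : u ∉ L ∪ H := fun hc =>
        ht (Finset.mem_union_left _
          (Finset.mem_union_right _ (Finset.mem_image_of_mem _ hc)))
      simp only [Sum.elim_inr, Sum.elim_inl]; rw [if_neg hu]
    · exact absurd (Finset.mem_union_right _ (by simp)) ht

/-- The initial marking of `N_d`: `M0` on the places of `N`, one token on
`p_d` and none on `p_d'`. -/
def init (M0 : P → ℕ) : P ⊕ Bool → ℕ :=
  Sum.elim M0 (fun b => if b then 1 else 0)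

/-- The unobservable transitions of `N_d`: the copies `t'` of `t ∈ H`. -/
def highCopies (H : Finset Tr) : Finset (Tr ⊕ Tr ⊕ Unit) :=
  H.image (fun t => Sum.inr (Sum.inl t))

end Gadget16

namespace Proof16
set_option linter.unusedSectionVars false
open PTNet

variable {P Tr : Type _} [DecidableEq P] [DecidableEq Tr]

theorem firesSeq_mem {N : PTNet P Tr} : ∀ {s : List Tr} {M M' : P → ℕ},
    N.FiresSeq M s M' → ∀ t ∈ s, t ∈ N.transitions
  | [], _, _, _, t, ht => by simp at ht
  | a :: s, M, M', h, t, ht => by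
    obtain ⟨M'', hf, hs⟩ := h
    rcases List.mem_cons.mp ht with rfl | ht
    · exact hf.1.1
    · exact firesSeq_mem hs t ht

theorem firesSeq_det {N : PTNet P Tr} : ∀ {s : List Tr} {M M1 M2 : P → ℕ},
    N.FiresSeq M s M1 → N.FiresSeq M s M2 → M1 = M2
  | [], _, _, _, h1, h2 => h1.trans h2.symm
  | a :: s, M, M1, M2, h1, h2 => by
    obtain ⟨Ma, hfa, hsa⟩ := h1
    obtain ⟨Mb, hfb, hsb⟩ := h2
    rw [hfa.2] at hsa; rw [hfb.2] at hsb
    exact firesSeq_det hsa hsb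

theorem restrict_fires_iff {N : PTNet P Tr} {A : Finset Tr} {M : P → ℕ} {t : Tr} {M' : P → ℕ} :
    (N.restrict A).Fires M t M' ↔ N.Fires M t M' ∧ t ∉ A := by
  have htr : (N.restrict A).transitions = N.transitions \ A := rfl
  constructor
  · rintro ⟨⟨ht, hpre⟩, rfl⟩
    rw [htr, Finset.mem_sdiff] at ht
    refine ⟨⟨⟨ht.1, fun p hp => ?_⟩, ?_⟩, ht.2⟩
    · simpa [PTNet.restrict, Finset.mem_sdiff, ht.1, ht.2] using hpre p hp
    · funext p
      simp [PTNet.fire, PTNet.restrict, Finset.mem_sdiff, ht.1, ht.2]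
  · rintro ⟨⟨⟨ht, hpre⟩, rfl⟩, hA⟩
    refine ⟨⟨?_, fun p hp => ?_⟩, ?_⟩
    · rw [htr, Finset.mem_sdiff]; exact ⟨ht, hA⟩
    · simpa [PTNet.restrict, Finset.mem_sdiff, ht, hA] using hpre p hp
    · funext p; simp [PTNet.fire, PTNet.restrict, Finset.mem_sdiff, ht, hA]

theorem restrict_firesSeq_iff {N : PTNet P Tr} {A : Finset Tr} : ∀ {s : List Tr} {M M' : P → ℕ},
    (N.restrict A).FiresSeq M s M' ↔ N.FiresSeq M s M' ∧ ∀ t ∈ s, t ∉ A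
  | [], M, M' => by simp [PTNet.FiresSeq]
  | a :: s, M, M' => by
    constructor
    · rintro ⟨M'', hf, hs⟩
      obtain ⟨hf, ha⟩ := restrict_fires_iff.mp hf
      obtain ⟨hs, hmem⟩ := restrict_firesSeq_iff.mp hs
      exact ⟨⟨M'', hf, hs⟩, by
        intro t ht
        rcases List.mem_cons.mp ht with rfl | ht
        · exact ha
        · exact hmem t ht⟩
    · rintro ⟨⟨M'', hf, hs⟩, hmem⟩
      refine ⟨M'', restrict_fires_iff.mpr ⟨hf, hmem a (by simp)⟩, ?_⟩
      exact restrict_firesSeq_iff.mpr ⟨hs, fun t ht => hmem t (by simp [ht])⟩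

theorem firesSeq_append_iff {N : PTNet P Tr} : ∀ {s1 s2 : List Tr} {M M' : P → ℕ},
    N.FiresSeq M (s1 ++ s2) M' ↔ ∃ M1, N.FiresSeq M s1 M1 ∧ N.FiresSeq M1 s2 M'
  | [], s2, M, M' => by
    simp only [List.nil_append]
    exact ⟨fun h => ⟨M, rfl, h⟩, fun ⟨M1, h1, h2⟩ => h1 ▸ h2⟩
  | a :: s1, s2, M, M' => by
    constructor
    · rintro ⟨M'', hf, hs⟩
      obtain ⟨M1, h1, h2⟩ := firesSeq_append_iff.mp hs
      exact ⟨M1, ⟨M'', hf, h1⟩, h2⟩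
    · rintro ⟨M1, ⟨M'', hf, h1⟩, h2⟩
      exact ⟨M'', hf, firesSeq_append_iff.mpr ⟨M1, h1, h2⟩⟩

end Proof16

namespace Proof16
open PTNet
set_option linter.unusedSectionVars false

variable {P Tr : Type _} [DecidableEq P] [DecidableEq Tr]

section Gadget

variable (N : PTNet P Tr) (L H : Finset Tr) (d : Tr)

def pr (u : Tr) : Tr ⊕ Tr ⊕ Unit := Sum.inr (Sum.inl u)

def dp : Tr ⊕ Tr ⊕ Unit := Sum.inr (Sum.inr ())

def e' (M : P → ℕ) : P ⊕ Bool → ℕ := Sum.elim M (fun b => if b then 0 else 1)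

theorem pr_injective : Function.Injective (pr (Tr := Tr)) := by
  intro a b h; simpa [pr] using h

theorem mem_G_inl {u : Tr} : (Sum.inl u : Tr ⊕ Tr ⊕ Unit) ∈ (Gadget16.net N L H d).transitions ↔ u ∈ N.transitions := by
  simp [Gadget16.net]

theorem mem_G_pr {u : Tr} : pr u ∈ (Gadget16.net N L H d).transitions ↔ u ∈ L ∪ H := by
  simp [Gadget16.net, pr]

theorem mem_G_dp : (dp : Tr ⊕ Tr ⊕ Unit) ∈ (Gadget16.net N L H d).transitions := by
  simp [Gadget16.net, dp]

theorem mem_G_places_inl {p : P} : (Sum.inl p : P ⊕ Bool) ∈ (Gadget16.net N L H d).places ↔ p ∈ N.places := by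
  simp [Gadget16.net]

theorem mem_G_places_inr {b : Bool} : (Sum.inr b : P ⊕ Bool) ∈ (Gadget16.net N L H d).places := by
  cases b <;> simp [Gadget16.net]

-- fire computations
theorem gfire_init_inl {u : Tr} (hu : u ∈ N.transitions) (M : P → ℕ) :
    (Gadget16.net N L H d).fire (Gadget16.init M) (Sum.inl u) = Gadget16.init (N.fire M u) := by
  funext q
  rcases q with p | b
  · by_cases hp : p ∈ N.places <;>
      simp [PTNet.fire, Gadget16.net, Gadget16.init, hu, hp]
  · cases b <;> simp [PTNet.fire, Gadget16.net, Gadget16.init, hu, mem_G_places_inr]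

theorem gfire_init_dp (M : P → ℕ) :
    (Gadget16.net N L H d).fire (Gadget16.init M) dp = e' (N.fire M d) := by
  funext q
  rcases q with p | b
  · by_cases hp : p ∈ N.places <;>
      simp [PTNet.fire, Gadget16.net, Gadget16.init, e', dp, hp]
  · cases b <;> simp [PTNet.fire, Gadget16.net, Gadget16.init, e', dp, mem_G_places_inr]

theorem gfire_e'_pr {u : Tr} (hu : u ∈ L ∪ H) (M : P → ℕ) :
    (Gadget16.net N L H d).fire (e' M) (pr u) = e' (N.fire M u) := by
  rcases Finset.mem_union.mp hu with h | h <;>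
  · funext q
    rcases q with p | b
    · by_cases hp : p ∈ N.places <;>
        simp [PTNet.fire, Gadget16.net, e', pr, h, hp]
    · cases b <;> simp [PTNet.fire, Gadget16.net, e', pr, h, mem_G_places_inr]

-- enabledness
theorem gEnabled_init_inl {u : Tr} {M : P → ℕ} :
    (Gadget16.net N L H d).Enabled (Gadget16.init M) (Sum.inl u) ↔ N.Enabled M u := by
  constructor
  · rintro ⟨ht, hpre⟩
    have hu := (mem_G_inl N L H d).mp ht
    refine ⟨hu, fun p hp => ?_⟩
    have := hpre (Sum.inl p) ((mem_G_places_inl N L H d).mpr hp)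
    simpa [Gadget16.net, Gadget16.init, hu] using this
  · rintro ⟨hu, hpre⟩
    refine ⟨(mem_G_inl N L H d).mpr hu, fun q hq => ?_⟩
    rcases q with p | b
    · have hp := (mem_G_places_inl N L H d).mp hq
      simpa [Gadget16.net, Gadget16.init, hu] using hpre p hp
    · cases b <;> simp [Gadget16.net, Gadget16.init, hu]

theorem gEnabled_init_dp {M : P → ℕ} (hdT : d ∈ N.transitions) :
    (Gadget16.net N L H d).Enabled (Gadget16.init M) dp ↔ N.Enabled M d := by
  constructor
  · rintro ⟨ht, hpre⟩
    refine ⟨hdT, fun p hp => ?_⟩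
    have := hpre (Sum.inl p) ((mem_G_places_inl N L H d).mpr hp)
    simpa [Gadget16.net, Gadget16.init, dp] using this
  · rintro ⟨_, hpre⟩
    refine ⟨mem_G_dp N L H d, fun q hq => ?_⟩
    rcases q with p | b
    · have hp := (mem_G_places_inl N L H d).mp hq
      simpa [Gadget16.net, Gadget16.init, dp] using hpre p hp
    · cases b <;> simp [Gadget16.net, Gadget16.init, dp]

theorem gEnabled_e'_pr {u : Tr} {M : P → ℕ} :
    (Gadget16.net N L H d).Enabled (e' M) (pr u) ↔ u ∈ L ∪ H ∧ ∀ p ∈ N.places, N.pre u p ≤ M p := by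
  constructor
  · rintro ⟨ht, hpre⟩
    have hu := (mem_G_pr N L H d).mp ht
    refine ⟨hu, fun p hp => ?_⟩
    have h2 := hpre (Sum.inl p) ((mem_G_places_inl N L H d).mpr hp)
    rcases Finset.mem_union.mp hu with h | h <;>
      simpa [Gadget16.net, e', pr, h] using h2
  · rintro ⟨hu, hpre⟩
    refine ⟨(mem_G_pr N L H d).mpr hu, fun q hq => ?_⟩
    rcases Finset.mem_union.mp hu with h | h <;>
    · rcases q with p | b
      · have hp := (mem_G_places_inl N L H d).mp hq
        simpa [Gadget16.net, e', pr, h] using hpre p hp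
      · cases b <;> simp [Gadget16.net, e', pr, h]

theorem not_gEnabled_init_pr {u : Tr} {M : P → ℕ} :
    ¬ (Gadget16.net N L H d).Enabled (Gadget16.init M) (pr u) := by
  rintro ⟨ht, hpre⟩
  have hu := (mem_G_pr N L H d).mp ht
  have h2 := hpre (Sum.inr false) (mem_G_places_inr N L H d)
  rcases Finset.mem_union.mp hu with h | h <;>
    simp [Gadget16.net, Gadget16.init, pr, h] at h2

theorem not_gEnabled_e'_inl {u : Tr} {M : P → ℕ} :
    ¬ (Gadget16.net N L H d).Enabled (e' M) (Sum.inl u) := by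
  rintro ⟨ht, hpre⟩
  have hu := (mem_G_inl N L H d).mp ht
  have := hpre (Sum.inr true) (mem_G_places_inr N L H d)
  simp [Gadget16.net, e', hu] at this

theorem not_gEnabled_e'_dp {M : P → ℕ} :
    ¬ (Gadget16.net N L H d).Enabled (e' M) dp := by
  rintro ⟨ht, hpre⟩
  have := hpre (Sum.inr true) (mem_G_places_inr N L H d)
  simp [Gadget16.net, e', dp] at this

end Gadget

end Proof16

namespace Proof16
open PTNet
set_option linter.unusedSectionVars false

variable {P Tr : Type _} [DecidableEq P] [DecidableEq Tr]

theorem sdiff_D (N : PTNet P Tr) (L D H : Finset Tr) (hT : N.transitions = L ∪ D ∪ H)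
    (hLD : Disjoint L D) (hDH : Disjoint D H) : N.transitions \ D = L ∪ H := by
  rw [hT]; ext u
  simp only [Finset.mem_sdiff, Finset.mem_union]
  constructor
  · rintro ⟨(h | h) | h, h2⟩
    · exact Or.inl h
    · exact absurd h h2
    · exact Or.inr h
  · rintro (h | h)
    · exact ⟨Or.inl (Or.inl h), Finset.disjoint_left.mp hLD h⟩
    · exact ⟨Or.inr h, Finset.disjoint_right.mp hDH h⟩

theorem sdiff_HD (N : PTNet P Tr) (L D H : Finset Tr) (hT : N.transitions = L ∪ D ∪ H)
    (hLD : Disjoint L D) (hLH : Disjoint L H) : N.transitions \ (H ∪ D) = L := by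
  rw [hT]; ext u
  simp only [Finset.mem_sdiff, Finset.mem_union, not_or]
  constructor
  · rintro ⟨(h | h) | h, hH, hD⟩
    · exact h
    · exact absurd h hD
    · exact absurd h hH
  · intro h
    exact ⟨Or.inl (Or.inl h), Finset.disjoint_left.mp hLH h, Finset.disjoint_left.mp hLD h⟩

section Gadget

variable (N : PTNet P Tr) (L D H : Finset Tr) (d : Tr)

theorem gFires_init_iff (hdT : d ∈ N.transitions) {M : P → ℕ} {t : Tr ⊕ Tr ⊕ Unit}
    {M'' : P ⊕ Bool → ℕ} :
    (Gadget16.net N L H d).Fires (Gadget16.init M) t M'' ↔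
      ((∃ u M', t = Sum.inl u ∧ N.Fires M u M' ∧ M'' = Gadget16.init M') ∨
       (t = dp ∧ N.Enabled M d ∧ M'' = e' (N.fire M d))) := by
  constructor
  · rintro ⟨hen, rfl⟩
    rcases t with u | u | u
    · left
      have hu := (gEnabled_init_inl N L H d).mp hen
      exact ⟨u, N.fire M u, rfl, ⟨hu, rfl⟩, gfire_init_inl N L H d hu.1 M⟩
    · exact absurd hen (not_gEnabled_init_pr N L H d)
    · right
      exact ⟨rfl, (gEnabled_init_dp N L H d hdT).mp hen, gfire_init_dp N L H d M⟩
  · rintro (⟨u, M', rfl, ⟨hen, rfl⟩, rfl⟩ | ⟨rfl, hen, rfl⟩)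
    · exact ⟨(gEnabled_init_inl N L H d).mpr hen, (gfire_init_inl N L H d hen.1 M).symm⟩
    · exact ⟨(gEnabled_init_dp N L H d hdT).mpr hen, (gfire_init_dp N L H d M).symm⟩

theorem gFires_e'_iff (hT : N.transitions = L ∪ D ∪ H) (hLD : Disjoint L D)
    (hDH : Disjoint D H) {M : P → ℕ} {t : Tr ⊕ Tr ⊕ Unit} {M'' : P ⊕ Bool → ℕ} :
    (Gadget16.net N L H d).Fires (e' M) t M'' ↔
      ∃ u M', t = pr u ∧ (N.restrict D).Fires M u M' ∧ M'' = e' M' := by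
  have hkey := sdiff_D N L D H hT hLD hDH
  constructor
  · rintro ⟨hen, rfl⟩
    rcases t with u | u | u
    · exact absurd hen (not_gEnabled_e'_inl N L H d)
    · obtain ⟨hu, hpre⟩ := (gEnabled_e'_pr N L H d).mp hen
      have huT : u ∈ N.transitions \ D := by rw [hkey]; exact hu
      rw [Finset.mem_sdiff] at huT
      exact ⟨u, N.fire M u, rfl,
        restrict_fires_iff.mpr ⟨⟨⟨huT.1, hpre⟩, rfl⟩, huT.2⟩,
        gfire_e'_pr N L H d hu M⟩
    · exact absurd hen (not_gEnabled_e'_dp N L H d)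
  · rintro ⟨u, M', rfl, hf, rfl⟩
    obtain ⟨⟨⟨huT, hpre⟩, rfl⟩, hnD⟩ := restrict_fires_iff.mp hf
    have hu : u ∈ L ∪ H := by rw [← hkey, Finset.mem_sdiff]; exact ⟨huT, hnD⟩
    exact ⟨(gEnabled_e'_pr N L H d).mpr ⟨hu, hpre⟩, (gfire_e'_pr N L H d hu M).symm⟩

theorem gSeq_e'_iff (hT : N.transitions = L ∪ D ∪ H) (hLD : Disjoint L D)
    (hDH : Disjoint D H) :
    ∀ {s : List (Tr ⊕ Tr ⊕ Unit)} {M : P → ℕ} {Mf : P ⊕ Bool → ℕ},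
    (Gadget16.net N L H d).FiresSeq (e' M) s Mf ↔
      ∃ ρ M', s = ρ.map pr ∧ (N.restrict D).FiresSeq M ρ M' ∧ Mf = e' M'
  | [], M, Mf => by
    constructor
    · intro h
      exact ⟨[], M, rfl, rfl, h⟩
    · rintro ⟨ρ, M', hρ, hseq, rfl⟩
      obtain rfl : ρ = [] := by simpa using hρ.symm
      obtain rfl : M' = M := hseq
      rfl
  | a :: s, M, Mf => by
    constructor
    · rintro ⟨M'', hf, hs⟩
      obtain ⟨u, M1, rfl, hf1, rfl⟩ := (gFires_e'_iff N L D H d hT hLD hDH).mp hf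
      obtain ⟨ρ, M', rfl, hseq, rfl⟩ := (gSeq_e'_iff hT hLD hDH).mp hs
      exact ⟨u :: ρ, M', rfl, ⟨M1, hf1, hseq⟩, rfl⟩
    · rintro ⟨ρ, M', hρ, hseq, rfl⟩
      rcases ρ with _ | ⟨u, ρ⟩
      · simp at hρ
      · rw [List.map_cons] at hρ
        injection hρ with h1 h2
        subst h1; subst h2
        obtain ⟨M1, hf1, hseq⟩ := hseq
        refine ⟨e' M1, (gFires_e'_iff N L D H d hT hLD hDH).mpr ⟨u, M1, rfl, hf1, rfl⟩, ?_⟩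
        exact (gSeq_e'_iff hT hLD hDH).mpr ⟨ρ, M', rfl, hseq, rfl⟩

theorem gSeq_init_iff (hdT : d ∈ N.transitions) (hT : N.transitions = L ∪ D ∪ H)
    (hLD : Disjoint L D) (hDH : Disjoint D H) :
    ∀ {s : List (Tr ⊕ Tr ⊕ Unit)} {M : P → ℕ} {Mf : P ⊕ Bool → ℕ},
    (Gadget16.net N L H d).FiresSeq (Gadget16.init M) s Mf ↔
      ((∃ χ M', s = χ.map Sum.inl ∧ N.FiresSeq M χ M' ∧ Mf = Gadget16.init M') ∨
       (∃ χ M1 ρ M', s = χ.map Sum.inl ++ dp :: ρ.map pr ∧ N.FiresSeq M χ M1 ∧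
          N.Enabled M1 d ∧ (N.restrict D).FiresSeq (N.fire M1 d) ρ M' ∧ Mf = e' M'))
  | [], M, Mf => by
    constructor
    · intro h
      exact Or.inl ⟨[], M, rfl, rfl, h⟩
    · rintro (⟨χ, M', hχ, hseq, rfl⟩ | ⟨χ, M1, ρ, M', hs, _, _, _, _⟩)
      · obtain rfl : χ = [] := by simpa using hχ.symm
        obtain rfl : M' = M := hseq
        rfl
      · exact absurd hs.symm (by simp)
  | a :: s, M, Mf => by
    constructor
    · rintro ⟨M'', hf, hs⟩
      rcases (gFires_init_iff N L H d hdT).mp hf with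
        ⟨u, M1, rfl, hf1, rfl⟩ | ⟨rfl, hen, rfl⟩
      · rcases (gSeq_init_iff hdT hT hLD hDH).mp hs with
          ⟨χ, M', rfl, hseq, rfl⟩ | ⟨χ, M2, ρ, M', rfl, hseq, hen, hρ, rfl⟩
        · exact Or.inl ⟨u :: χ, M', rfl, ⟨M1, hf1, hseq⟩, rfl⟩
        · exact Or.inr ⟨u :: χ, M2, ρ, M', rfl, ⟨M1, hf1, hseq⟩, hen, hρ, rfl⟩
      · obtain ⟨ρ, M', rfl, hseq, rfl⟩ := (gSeq_e'_iff N L D H d hT hLD hDH).mp hs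
        exact Or.inr ⟨[], M, ρ, M', rfl, rfl, hen, hseq, rfl⟩
    · rintro (⟨χ, M', hχ, hseq, rfl⟩ | ⟨χ, M1, ρ, M', hs, hseq, hen, hρ, rfl⟩)
      · rcases χ with _ | ⟨u, χ⟩
        · simp at hχ
        · rw [List.map_cons] at hχ
          injection hχ with h1 h2
          subst h1; subst h2
          obtain ⟨M1, hf1, hseq⟩ := hseq
          refine ⟨Gadget16.init M1,
            (gFires_init_iff N L H d hdT).mpr (Or.inl ⟨u, M1, rfl, hf1, rfl⟩), ?_⟩
          exact (gSeq_init_iff hdT hT hLD hDH).mpr (Or.inl ⟨χ, M', rfl, hseq, rfl⟩)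
      · rcases χ with _ | ⟨u, χ⟩
        · rw [List.map_nil, List.nil_append] at hs
          injection hs with h1 h2
          subst h1; subst h2
          obtain rfl : M1 = _ := hseq
          refine ⟨_,
            (gFires_init_iff N L H d hdT).mpr (Or.inr ⟨rfl, hen, rfl⟩), ?_⟩
          exact (gSeq_e'_iff N L D H d hT hLD hDH).mpr ⟨ρ, M', rfl, hρ, rfl⟩
        · rw [List.map_cons, List.cons_append] at hs
          injection hs with h1 h2
          subst h1; subst h2
          obtain ⟨M2, hf1, hseq⟩ := hseq
          refine ⟨Gadget16.init M2,
            (gFires_init_iff N L H d hdT).mpr (Or.inl ⟨u, M2, rfl, hf1, rfl⟩), ?_⟩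
          exact (gSeq_init_iff hdT hT hLD hDH).mpr
            (Or.inr ⟨χ, M1, ρ, M', rfl, hseq, hen, hρ, rfl⟩)

end Gadget

end Proof16

namespace Proof16
open PTNet
set_option linter.unusedSectionVars false

variable {P Tr : Type _} [DecidableEq P] [DecidableEq Tr]

section Gadget

variable (N : PTNet P Tr) (L H : Finset Tr) (d : Tr)

theorem inl_mem_Obs {u : Tr} (hu : u ∈ N.transitions) :
    (Sum.inl u : Tr ⊕ Tr ⊕ Unit) ∈
      (Gadget16.net N L H d).transitions \ Gadget16.highCopies H := by
  rw [Finset.mem_sdiff]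
  exact ⟨(mem_G_inl N L H d).mpr hu, by simp [Gadget16.highCopies]⟩

theorem dp_mem_Obs :
    (dp : Tr ⊕ Tr ⊕ Unit) ∈
      (Gadget16.net N L H d).transitions \ Gadget16.highCopies H := by
  rw [Finset.mem_sdiff]
  exact ⟨mem_G_dp N L H d, by simp [Gadget16.highCopies, dp]⟩

theorem pr_mem_Obs_iff (hLH : Disjoint L H) {u : Tr} (hu : u ∈ L ∪ H) :
    (pr u ∈ (Gadget16.net N L H d).transitions \ Gadget16.highCopies H) ↔ u ∈ L := by
  rw [Finset.mem_sdiff]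
  constructor
  · rintro ⟨ht, hnc⟩
    have hnH : u ∉ H := by simpa [Gadget16.highCopies, pr] using hnc
    rcases Finset.mem_union.mp hu with h | h
    · exact h
    · exact absurd h hnH
  · intro h
    refine ⟨(mem_G_pr N L H d).mpr hu, ?_⟩
    have := Finset.disjoint_left.mp hLH h
    simpa [Gadget16.highCopies, pr] using this

theorem filter_map_inl {χ : List Tr} (h : ∀ t ∈ χ, t ∈ N.transitions) :
    (χ.map Sum.inl).filter
        (· ∈ (Gadget16.net N L H d).transitions \ Gadget16.highCopies H) =
      χ.map Sum.inl := by
  refine List.filter_eq_self.mpr ?_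
  intro a ha
  obtain ⟨t, ht, rfl⟩ := List.mem_map.mp ha
  simpa using inl_mem_Obs N L H d (h t ht)

theorem filter_map_pr (hLH : Disjoint L H) {σ : List Tr} (h : ∀ u ∈ σ, u ∈ L ∪ H) :
    (σ.map pr).filter
        (· ∈ (Gadget16.net N L H d).transitions \ Gadget16.highCopies H) =
      (σ.filter (· ∈ L)).map pr := by
  rw [List.filter_map]
  refine congrArg (List.map pr) (List.filter_congr ?_)
  intro u hu
  simp only [Function.comp]
  exact decide_eq_decide.mpr (pr_mem_Obs_iff N L H d hLH (h u hu))

theorem filter_main (hLH : Disjoint L H) {χ σ : List Tr}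
    (hχ : ∀ t ∈ χ, t ∈ N.transitions) (hσ : ∀ u ∈ σ, u ∈ L ∪ H) :
    (χ.map Sum.inl ++ dp :: σ.map pr).filter
        (· ∈ (Gadget16.net N L H d).transitions \ Gadget16.highCopies H) =
      χ.map Sum.inl ++ dp :: (σ.filter (· ∈ L)).map pr := by
  rw [List.filter_append, List.filter_cons, if_pos (decide_eq_true (dp_mem_Obs N L H d)),
    filter_map_inl N L H d hχ, filter_map_pr N L H d hLH hσ]

end Gadget

theorem decomp : ∀ {a b : List Tr} {x y : List (Tr ⊕ Tr ⊕ Unit)},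
    a.map Sum.inl ++ dp :: x = b.map Sum.inl ++ dp :: y → a = b ∧ x = y
  | [], [], x, y, h => by
    simp only [List.map_nil, List.nil_append] at h
    injection h with _ h2
    exact ⟨rfl, h2⟩
  | [], c :: b, x, y, h => by
    simp only [List.map_nil, List.map_cons, List.nil_append, List.cons_append] at h
    injection h with h1 _
    exact absurd h1 (by simp [dp])
  | c :: a, [], x, y, h => by
    simp only [List.map_nil, List.map_cons, List.nil_append, List.cons_append] at h
    injection h with h1 _
    exact absurd h1 (by simp [dp])
  | c :: a, c' :: b, x, y, h => by
    simp only [List.map_cons, List.cons_append] at h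
    injection h with h1 h2
    injection h1 with h1
    obtain ⟨rfl, rfl⟩ := decomp h2
    exact ⟨by rw [h1], rfl⟩

end Proof16

/-- `(N\D, M)` and `(N\(H∪D), M)` are language equivalent
(observable transitions `L`) for every `M` with `M0[υd⟩M` in `N`, iff
`N_d` and `N_d \ H'` are language equivalent (all transitions observable
except those in `H' = {t' | t ∈ H}`). -/
theorem lang_eq_iff_gadget
    {P Tr : Type _} [DecidableEq P] [DecidableEq Tr]
    (N : PTNet P Tr) (M0 : P → ℕ) (L D H : Finset Tr)
    (hT : N.transitions = L ∪ D ∪ H)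
    (hLD : Disjoint L D) (hLH : Disjoint L H) (hDH : Disjoint D H)
    (d : Tr) (hd : d ∈ D) :
    (∀ (υ : List Tr) (M : P → ℕ), N.FiresSeq M0 (υ ++ [d]) M →
        (N.restrict D).lang M L = (N.restrict (H ∪ D)).lang M L) ↔
      (Gadget16.net N L H d).lang (Gadget16.init M0)
          ((Gadget16.net N L H d).transitions \ Gadget16.highCopies H) =
        ((Gadget16.net N L H d).restrict (Gadget16.highCopies H)).lang
          (Gadget16.init M0)
          ((Gadget16.net N L H d).transitions \ Gadget16.highCopies H) := by
  have hdT : d ∈ N.transitions := by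
    rw [hT]; exact Finset.mem_union_left _ (Finset.mem_union_right _ hd)
  have hkeyD := Proof16.sdiff_D N L D H hT hLD hDH
  have hkeyHD := Proof16.sdiff_HD N L D H hT hLD hLH
  constructor
  · intro hyp
    apply Set.Subset.antisymm
    · rintro w ⟨s, Mf, hs, hfil⟩
      rcases (Proof16.gSeq_init_iff N L D H d hdT hT hLD hDH).mp hs with
        ⟨χ, M', rfl, hχ, rfl⟩ | ⟨χ, M1, ρ, M', rfl, hχ, hen, hρ, rfl⟩
      · refine ⟨χ.map Sum.inl, Gadget16.init M',
          Proof16.restrict_firesSeq_iff.mpr ⟨hs, ?_⟩, hfil⟩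
        intro t ht hc
        obtain ⟨u, hu, rfl⟩ := List.mem_map.mp ht
        simp [Gadget16.highCopies] at hc
      · have hmemχ := Proof16.firesSeq_mem hχ
        have hmemρ : ∀ u ∈ ρ, u ∈ L ∪ H := fun u hu => by
          have h1 := Proof16.firesSeq_mem hρ u hu
          rwa [show (N.restrict D).transitions = N.transitions \ D from rfl, hkeyD] at h1
        have hw0 : (ρ.filter (· ∈ L)) ∈ (N.restrict D).lang (N.fire M1 d) L :=
          ⟨ρ, M', hρ, rfl⟩
        have hNseq : N.FiresSeq M0 (χ ++ [d]) (N.fire M1 d) :=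
          Proof16.firesSeq_append_iff.mpr ⟨M1, hχ, N.fire M1 d, ⟨hen, rfl⟩, rfl⟩
        rw [hyp χ _ hNseq] at hw0
        obtain ⟨ρ', M'', hρ', hfil'⟩ := hw0
        obtain ⟨hρ'N, hmem'⟩ := Proof16.restrict_firesSeq_iff.mp hρ'
        have hLρ' : ∀ u ∈ ρ', u ∈ L := fun u hu => by
          rw [← hkeyHD, Finset.mem_sdiff]
          exact ⟨Proof16.firesSeq_mem hρ'N u hu, hmem' u hu⟩
        have hρ'D : (N.restrict D).FiresSeq (N.fire M1 d) ρ' M'' :=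
          Proof16.restrict_firesSeq_iff.mpr
            ⟨hρ'N, fun t ht hDm => hmem' t ht (Finset.mem_union_right _ hDm)⟩
        have hmemρ' : ∀ u ∈ ρ', u ∈ L ∪ H := fun u hu =>
          Finset.mem_union_left _ (hLρ' u hu)
        have hG : (Gadget16.net N L H d).FiresSeq (Gadget16.init M0)
            (χ.map Sum.inl ++ Proof16.dp :: ρ'.map Proof16.pr) (Proof16.e' M'') :=
          (Proof16.gSeq_init_iff N L D H d hdT hT hLD hDH).mpr
            (Or.inr ⟨χ, M1, ρ', M'', rfl, hχ, hen, hρ'D, rfl⟩)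
        refine ⟨_, _, Proof16.restrict_firesSeq_iff.mpr ⟨hG, ?_⟩, ?_⟩
        · intro t ht hc
          obtain ⟨v, hvH, rfl⟩ := Finset.mem_image.mp hc
          rcases List.mem_append.mp ht with h | h
          · obtain ⟨u, _, he⟩ := List.mem_map.mp h
            simp at he
          · rcases List.mem_cons.mp h with he | h
            · simp [Proof16.dp] at he
            · obtain ⟨u, huρ, he⟩ := List.mem_map.mp h
              have huv : u = v := by simpa [Proof16.pr] using he
              subst huv
              exact Finset.disjoint_left.mp hLH (hLρ' u huρ) hvH
        · rw [Proof16.filter_main N L H d hLH hmemχ hmemρ', ← hfil,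
            Proof16.filter_main N L H d hLH hmemχ hmemρ, hfil']
    · rintro w ⟨s, Mf, hs, hfil⟩
      exact ⟨s, Mf, (Proof16.restrict_firesSeq_iff.mp hs).1, hfil⟩
  · intro hg υ M hseq
    obtain ⟨M1, hυ, M2, hfd, h2⟩ := Proof16.firesSeq_append_iff.mp hseq
    obtain rfl : M = M2 := h2
    obtain ⟨hen, rfl⟩ := hfd
    have hmemυ := Proof16.firesSeq_mem hυ
    apply Set.Subset.antisymm
    · rintro w0 ⟨ρ, M', hρ, hfil⟩
      have hmemρ : ∀ u ∈ ρ, u ∈ L ∪ H := fun u hu => by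
        have h1 := Proof16.firesSeq_mem hρ u hu
        rwa [show (N.restrict D).transitions = N.transitions \ D from rfl, hkeyD] at h1
      have hG : (Gadget16.net N L H d).FiresSeq (Gadget16.init M0)
          (υ.map Sum.inl ++ Proof16.dp :: ρ.map Proof16.pr) (Proof16.e' M') :=
        (Proof16.gSeq_init_iff N L D H d hdT hT hLD hDH).mpr
          (Or.inr ⟨υ, M1, ρ, M', rfl, hυ, hen, hρ, rfl⟩)
      have hwmem : ((υ.map Sum.inl ++ Proof16.dp :: ρ.map Proof16.pr).filter
            (· ∈ (Gadget16.net N L H d).transitions \ Gadget16.highCopies H)) ∈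
          (Gadget16.net N L H d).lang (Gadget16.init M0)
            ((Gadget16.net N L H d).transitions \ Gadget16.highCopies H) :=
        ⟨_, _, hG, rfl⟩
      rw [hg] at hwmem
      obtain ⟨s', Mf', hs', hfil'⟩ := hwmem
      obtain ⟨hs'G, hmem'⟩ := Proof16.restrict_firesSeq_iff.mp hs'
      rw [Proof16.filter_main N L H d hLH hmemυ hmemρ] at hfil'
      rcases (Proof16.gSeq_init_iff N L D H d hdT hT hLD hDH).mp hs'G with
        ⟨χ, M'', rfl, hχ, _⟩ | ⟨χ, M1', ρ', M''', rfl, hχ, hen', hρ', _⟩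
      · exfalso
        rw [Proof16.filter_map_inl N L H d (Proof16.firesSeq_mem hχ)] at hfil'
        have hdpm : Proof16.dp ∈ χ.map (Sum.inl : Tr → Tr ⊕ Tr ⊕ Unit) := by
          rw [hfil']; simp
        obtain ⟨a, _, ha⟩ := List.mem_map.mp hdpm
        simp [Proof16.dp] at ha
      · have hmemχ := Proof16.firesSeq_mem hχ
        have hmemρ' : ∀ u ∈ ρ', u ∈ L ∪ H := fun u hu => by
          have h1 := Proof16.firesSeq_mem hρ' u hu
          rwa [show (N.restrict D).transitions = N.transitions \ D from rfl, hkeyD] at h1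
        rw [Proof16.filter_main N L H d hLH hmemχ hmemρ'] at hfil'
        obtain ⟨rfl, hxy⟩ := Proof16.decomp hfil'
        have hff : ρ'.filter (· ∈ L) = ρ.filter (· ∈ L) :=
          List.map_injective_iff.mpr Proof16.pr_injective hxy
        obtain rfl : M1' = M1 := Proof16.firesSeq_det hχ hυ
        obtain ⟨hρ'N, hnD⟩ := Proof16.restrict_firesSeq_iff.mp hρ'
        have hnH : ∀ u ∈ ρ', u ∉ H := fun u hu hH =>
          hmem' (Proof16.pr u)
            (List.mem_append_right _ (List.mem_cons_of_mem _ (List.mem_map_of_mem hu)))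
            (Finset.mem_image.mpr ⟨u, hH, rfl⟩)
        refine ⟨ρ', M''', Proof16.restrict_firesSeq_iff.mpr ⟨hρ'N, fun t ht hc => ?_⟩, ?_⟩
        · rcases Finset.mem_union.mp hc with h | h
          · exact hnH t ht h
          · exact hnD t ht h
        · rw [hff, hfil]
    · rintro w0 ⟨ρ, M', hρ, hfil⟩
      obtain ⟨hρN, hmem⟩ := Proof16.restrict_firesSeq_iff.mp hρ
      exact ⟨ρ, M', Proof16.restrict_firesSeq_iff.mpr
        ⟨hρN, fun t ht hDm => hmem t ht (Finset.mem_union_right _ hDm)⟩, hfil⟩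
end
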